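/- arXiv:1206.3539 — 2 statements merged into one kernel-verified Lean document; each statement's English description precedes it below -/
import Mathlib

section
/- Every Gurariĭ space has the Daugavet property, and hence also the strong diameter 2 property. -/
universe u v

open Metric Set

section Defs

variable {Y : Type*} [NormedAddCommGroup Y] [NormedSpace ℝ Y]

/-- `X` is an ideal in `Y`. -/
def IsIdeal (X : Subspace ℝ Y) : Prop :=
  ∀ ε : ℝ, 0 < ε → ∀ E : Subspace ℝ Y, FiniteDimensional ℝ E →
    ∃ T : E →ₗ[ℝ] X,
      (∀ e : E, (e : Y) ∈ X → ((T e : X) : Y) = (e : Y)) ∧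
      (∀ e : E, ‖T e‖ ≤ (1 + ε) * ‖e‖)

/-- `X` is a super-ideal in `Y`. -/
def IsSuperIdeal (X : Subspace ℝ Y) : Prop :=
  ∀ ε : ℝ, 0 < ε → ∀ E : Subspace ℝ Y, FiniteDimensional ℝ E →
    ∃ T : E →ₗ[ℝ] X,
      (∀ e : E, (e : Y) ∈ X → ((T e : X) : Y) = (e : Y)) ∧
      (∀ e : E, (1 + ε)⁻¹ * ‖e‖ ≤ ‖T e‖ ∧ ‖T e‖ ≤ (1 + ε) * ‖e‖)

/-- `X` is a super u-ideal in `Y`. -/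
def IsSuperUIdeal (X : Subspace ℝ Y) : Prop :=
  ∀ ε : ℝ, 0 < ε → ∀ E : Subspace ℝ Y, FiniteDimensional ℝ E →
    ∃ T : E →ₗ[ℝ] X,
      (∀ e : E, (e : Y) ∈ X → ((T e : X) : Y) = (e : Y)) ∧
      (∀ e : E, (1 + ε)⁻¹ * ‖e‖ ≤ ‖T e‖ ∧ ‖T e‖ ≤ (1 + ε) * ‖e‖) ∧
      (∀ e : E, ‖(e : Y) - (2 : ℝ) • ((T e : X) : Y)‖ ≤ (1 + ε) * ‖e‖)

/-- `φ : X* → Y*` is a Hahn-Banach extension operator. -/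
def IsHahnBanachExtensionOperator (X : Subspace ℝ Y)
    (φ : (X →L[ℝ] ℝ) →L[ℝ] (Y →L[ℝ] ℝ)) : Prop :=
  ∀ f : X →L[ℝ] ℝ, (∀ x : X, φ f (x : Y) = f x) ∧ ‖φ f‖ = ‖f‖

/-- A set of functionals `V ⊆ Y*` is 1-norming for `Y`. -/
def IsOneNorming (V : Set (Y →L[ℝ] ℝ)) : Prop :=
  ∀ y : Y, ‖y‖ = sSup {r : ℝ | ∃ v ∈ V, ‖v‖ ≤ 1 ∧ r = |v y|}

end Defs

section Props

variable (Z : Type*) [NormedAddCommGroup Z] [NormedSpace ℝ Z]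

/-- A slice of the closed unit ball of `Z`. -/
def IsSlice (S : Set Z) : Prop :=
  ∃ (f : Z →L[ℝ] ℝ) (ε : ℝ), ‖f‖ = 1 ∧ 0 < ε ∧
    S = {z | z ∈ closedBall (0 : Z) 1 ∧ 1 - ε < f z}

/-- The local diameter 2 property. -/
def HasLocalDiameterTwoProperty : Prop :=
  ∀ S : Set Z, IsSlice Z S → Metric.diam S = 2

/-- The diameter 2 property. -/
def HasDiameterTwoProperty : Prop :=
  ∀ U : Set Z, U.Nonempty →
    (∃ V : Set Z, @IsOpen (WeakSpace ℝ Z) _ V ∧ U = V ∩ closedBall (0 : Z) 1) →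
    Metric.diam U = 2

/-- The strong diameter 2 property. -/
def HasStrongDiameterTwoProperty : Prop :=
  ∀ (n : ℕ), 0 < n → ∀ (S : Fin n → Set Z) (lam : Fin n → ℝ),
    (∀ i, IsSlice Z (S i)) → (∀ i, 0 ≤ lam i) → (∑ i, lam i) = 1 →
    Metric.diam {z : Z | ∃ x : Fin n → Z, (∀ i, x i ∈ S i) ∧ z = ∑ i, lam i • x i} = 2

/-- The Daugavet property. -/
def HasDaugavetProperty : Prop :=
  ∀ T : Z →L[ℝ] Z, Module.finrank ℝ (LinearMap.range (T : Z →ₗ[ℝ] Z)) = 1 →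
    ‖ContinuousLinearMap.id ℝ Z + T‖ = 1 + ‖T‖

end Props

/-- `X` is a Gurariĭ space. -/
def IsGurarii (X : Type*) [NormedAddCommGroup X] [NormedSpace ℝ X] : Prop :=
  ∀ ε : ℝ, 0 < ε →
    ∀ (F : Type) [NormedAddCommGroup F] [NormedSpace ℝ F] [FiniteDimensional ℝ F],
      ∀ (E : Subspace ℝ F) (TE : E →ₗᵢ[ℝ] X),
        ∃ TF : F →ₗ[ℝ] X,
          (∀ e : E, TF (e : F) = TE e) ∧
          (∀ f : F, (1 + ε)⁻¹ * ‖f‖ ≤ ‖TF f‖ ∧ ‖TF f‖ ≤ (1 + ε) * ‖f‖)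

/-- `X` is a Lindenstrauss space: its dual is isometric to some `L¹(μ)`. -/
def IsLindenstrauss (X : Type u) [NormedAddCommGroup X] [NormedSpace ℝ X] : Prop :=
  ∃ (α : Type u) (m : MeasurableSpace α) (μ : @MeasureTheory.Measure α m),
    Nonempty ((X →L[ℝ] ℝ) ≃ₗᵢ[ℝ] MeasureTheory.Lp ℝ 1 μ)



noncomputable section GurariiProof

def Shadow (n : ℕ) : Type := Fin n → ℝ
instance (n : ℕ) : AddCommGroup (Shadow n) := inferInstanceAs (AddCommGroup (Fin n → ℝ))
instance (n : ℕ) : Module ℝ (Shadow n) := inferInstanceAs (Module ℝ (Fin n → ℝ))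
instance (n : ℕ) : FiniteDimensional ℝ (Shadow n) :=
  inferInstanceAs (FiniteDimensional ℝ (Fin n → ℝ))
def shadowEquiv (n : ℕ) : Shadow n ≃ₗ[ℝ] (Fin n → ℝ) := LinearEquiv.refl ℝ (Fin n → ℝ)






namespace GurariiAux

variable {V : Type*} [NormedAddCommGroup V] [NormedSpace ℝ V]

/-- auxiliary expression defining the extension norm -/
def ee (p : V) (q : ℝ) (v : V × ℝ) (l : ℝ) : ℝ := ‖v.1 - l • p‖ + |v.2 + l * q| + |l|

/-- the extension norm -/
noncomputable def NN (p : V) (q : ℝ) (v : V × ℝ) : ℝ := sInf {r | ∃ l, r = ee p q v l}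

variable {p : V} {q : ℝ}

lemma ee_nonneg (v : V × ℝ) (l : ℝ) : 0 ≤ ee p q v l := by unfold ee; positivity

lemma NN_le (v : V × ℝ) (l : ℝ) : NN p q v ≤ ee p q v l :=
  csInf_le ⟨0, by rintro r ⟨l', rfl⟩; exact ee_nonneg v l'⟩ ⟨l, rfl⟩

lemma NN_ge (v : V × ℝ) (b : ℝ) (h : ∀ l, b ≤ ee p q v l) : b ≤ NN p q v := by
  refine le_csInf ⟨ee p q v 0, 0, rfl⟩ ?_
  rintro r ⟨l, rfl⟩; exact h l

lemma NN_nonneg (v : V × ℝ) : 0 ≤ NN p q v := NN_ge v 0 (ee_nonneg v)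

lemma NN_zero : NN p q 0 = 0 := by
  refine le_antisymm ?_ (NN_nonneg 0)
  have h := NN_le (p := p) (q := q) 0 0
  have e : ee p q 0 0 = 0 := by unfold ee; simp
  rwa [e] at h

lemma NN_add (v w : V × ℝ) : NN p q (v + w) ≤ NN p q v + NN p q w := by
  have key : ∀ l₁ l₂, NN p q (v + w) ≤ ee p q v l₁ + ee p q w l₂ := by
    intro l₁ l₂
    refine (NN_le (v + w) (l₁ + l₂)).trans ?_
    unfold ee
    have e1 : (v + w).1 - (l₁ + l₂) • p = (v.1 - l₁ • p) + (w.1 - l₂ • p) := by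
      rw [Prod.fst_add, add_smul]; abel
    have e2 : (v + w).2 + (l₁ + l₂) * q = (v.2 + l₁ * q) + (w.2 + l₂ * q) := by
      rw [Prod.snd_add]; ring
    rw [e1, e2]
    have t1 := norm_add_le (v.1 - l₁ • p) (w.1 - l₂ • p)
    have t2 := abs_add_le (v.2 + l₁ * q) (w.2 + l₂ * q)
    have t3 := abs_add_le l₁ l₂
    linarith
  have h1 : ∀ l₁, NN p q (v + w) - ee p q v l₁ ≤ NN p q w := fun l₁ =>
    NN_ge w _ (fun l₂ => by linarith [key l₁ l₂])
  have h2 : NN p q (v + w) - NN p q w ≤ NN p q v :=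
    NN_ge v _ (fun l₁ => by linarith [h1 l₁])
  linarith

lemma NN_neg (v : V × ℝ) : NN p q (-v) = NN p q v := by
  have h : ∀ v : V × ℝ, NN p q (-v) ≤ NN p q v := by
    intro v
    refine NN_ge v (NN p q (-v)) (fun l => ?_)
    refine (NN_le (-v) (-l)).trans_eq ?_
    unfold ee
    rw [Prod.fst_neg, Prod.snd_neg]
    have e1 : -v.1 - (-l) • p = -(v.1 - l • p) := by rw [neg_smul]; abel
    have e2 : -v.2 + -l * q = -(v.2 + l * q) := by ring
    rw [e1, norm_neg, e2, abs_neg, abs_neg]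
  exact le_antisymm (h v) (by simpa using h (-v))

lemma NN_smul (r : ℝ) (v : V × ℝ) : NN p q (r • v) = |r| * NN p q v := by
  have hle : ∀ (r : ℝ), r ≠ 0 → ∀ v : V × ℝ, NN p q (r • v) ≤ |r| * NN p q v := by
    intro r hr v
    have habs : 0 < |r| := abs_pos.mpr hr
    have key : ∀ l, NN p q (r • v) ≤ |r| * ee p q v l := by
      intro l
      refine (NN_le (r • v) (r * l)).trans_eq ?_
      unfold ee
      rw [Prod.smul_fst, Prod.smul_snd]
      have e1 : r • v.1 - (r * l) • p = r • (v.1 - l • p) := by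
        rw [smul_sub, mul_smul]
      have e2 : r • v.2 + r * l * q = r * (v.2 + l * q) := by
        rw [smul_eq_mul]; ring
      rw [e1, norm_smul, Real.norm_eq_abs, e2, abs_mul, abs_mul]
      ring
    have h' : NN p q (r • v) / |r| ≤ NN p q v := by
      refine NN_ge v _ (fun l => ?_)
      rw [div_le_iff₀ habs]
      calc NN p q (r • v) ≤ |r| * ee p q v l := key l
        _ = ee p q v l * |r| := by ring
    calc NN p q (r • v) = (NN p q (r • v) / |r|) * |r| :=
          (div_mul_cancel₀ _ (ne_of_gt habs)).symm
      _ ≤ NN p q v * |r| := mul_le_mul_of_nonneg_right h' habs.le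
      _ = |r| * NN p q v := by ring
  rcases eq_or_ne r 0 with rfl | hr
  · simp [NN_zero]
  · refine le_antisymm (hle r hr v) ?_
    have h2 := hle r⁻¹ (inv_ne_zero hr) (r • v)
    rw [inv_smul_smul₀ hr, abs_inv] at h2
    have habs : 0 < |r| := abs_pos.mpr hr
    calc |r| * NN p q v ≤ |r| * (|r|⁻¹ * NN p q (r • v)) :=
          mul_le_mul_of_nonneg_left h2 habs.le
      _ = NN p q (r • v) := by rw [← mul_assoc, mul_inv_cancel₀ (ne_of_gt habs), one_mul]

lemma abs_snd_le (hq0 : 0 < q) (hq1 : q ≤ 1) (v : V × ℝ) : |v.2| ≤ NN p q v := by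
  refine NN_ge v _ (fun l => ?_)
  unfold ee
  have h1 : |v.2| ≤ |v.2 + l * q| + |l * q| := by
    have := abs_add_le (v.2 + l * q) (-(l * q)); simpa using this
  have h2 : |l * q| ≤ |l| := by
    rw [abs_mul, abs_of_pos hq0]
    nlinarith [abs_nonneg l]
  have h3 : 0 ≤ ‖v.1 - l • p‖ := norm_nonneg _
  linarith

lemma norm_fst_le (v : V × ℝ) : ‖v.1‖ ≤ (1 + ‖p‖) * NN p q v := by
  have hs' : 0 < 1 + ‖p‖ := by positivity
  have h' : ‖v.1‖ / (1 + ‖p‖) ≤ NN p q v := by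
    refine NN_ge v _ (fun l => ?_)
    unfold ee
    have h1 : ‖v.1‖ - |l| * ‖p‖ ≤ ‖v.1 - l • p‖ := by
      have h2 : ‖l • p‖ = |l| * ‖p‖ := by rw [norm_smul, Real.norm_eq_abs]
      have h3 := norm_sub_norm_le v.1 (v.1 - l • p)
      have h4 : v.1 - (v.1 - l • p) = l • p := by abel
      rw [h4, h2] at h3
      linarith
    have h0 : 0 ≤ |v.2 + l * q| := abs_nonneg _
    rcases le_or_gt (‖v.1‖ / (1 + ‖p‖)) |l| with h | h
    · have := norm_nonneg (v.1 - l • p)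
      linarith
    · have h5 : |l| * ‖p‖ ≤ (‖v.1‖ / (1 + ‖p‖)) * ‖p‖ :=
        mul_le_mul_of_nonneg_right h.le (norm_nonneg p)
      have h6 : ‖v.1‖ / (1 + ‖p‖) * (1 + ‖p‖) = ‖v.1‖ := div_mul_cancel₀ _ (ne_of_gt hs')
      have := abs_nonneg l
      nlinarith
  calc ‖v.1‖ = (‖v.1‖ / (1 + ‖p‖)) * (1 + ‖p‖) := (div_mul_cancel₀ _ (ne_of_gt hs')).symm
    _ ≤ NN p q v * (1 + ‖p‖) := mul_le_mul_of_nonneg_right h' hs'.le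
    _ = (1 + ‖p‖) * NN p q v := by ring

lemma NN_fst (hq0 : 0 < q) (hsq : ‖p‖ ≤ 1 + q) (e : V) : NN p q (e, 0) = ‖e‖ := by
  refine le_antisymm ?_ ?_
  · have h := NN_le (p := p) (q := q) (e, 0) 0
    have e0 : ee p q (e, 0) 0 = ‖e‖ := by unfold ee; simp
    rwa [e0] at h
  · refine NN_ge (e, 0) _ (fun l => ?_)
    unfold ee
    have h1 : ‖e‖ - |l| * ‖p‖ ≤ ‖e - l • p‖ := by
      have h2 : ‖l • p‖ = |l| * ‖p‖ := by rw [norm_smul, Real.norm_eq_abs]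
      have h3 := norm_sub_norm_le e (e - l • p)
      have h4 : e - (e - l • p) = l • p := by abel
      rw [h4, h2] at h3
      linarith
    have h4 : |(0 : ℝ) + l * q| = |l| * q := by
      rw [zero_add, abs_mul, abs_of_pos hq0]
    rw [h4]
    nlinarith [abs_nonneg l, mul_le_mul_of_nonneg_left hsq (abs_nonneg l)]

lemma NN_le_one : NN p q ((0 : V), (1 : ℝ)) ≤ 1 := by
  have h := NN_le (p := p) (q := q) ((0 : V), (1 : ℝ)) 0
  have e0 : ee p q ((0 : V), (1 : ℝ)) 0 = 1 := by unfold ee; simp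
  rwa [e0] at h

lemma NN_vec : NN p q (p, -q) ≤ 1 := by
  have h := NN_le (p := p) (q := q) (p, -q) 1
  have e0 : ee p q (p, -q) 1 = 1 := by unfold ee; simp
  rwa [e0] at h

lemma NN_align {γ : ℝ} (u : V) (hu : ‖u‖ = 1) (hs1 : 1 ≤ ‖p‖) (hq0 : 0 < q)
    (hq2 : 2 * q ≤ 1) (hsq : ‖p‖ ≤ 1 + q) (hγ0 : 0 ≤ γ) (hγ : ‖p‖ + q - 1 ≤ γ * ‖p‖) :
    2 - γ ≤ NN p q (u, 1) := by
  set s : ℝ := ‖p‖ with hsdef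
  have hs0 : 0 < s := by linarith
  refine NN_ge (u, 1) _ (fun l => ?_)
  unfold ee
  dsimp only
  have hlp : ‖l • p‖ = |l| * s := by rw [norm_smul, Real.norm_eq_abs]
  have h1 : 1 - |l| * s ≤ ‖u - l • p‖ := by
    have h3 := norm_sub_norm_le u (u - l • p)
    have h4 : u - (u - l • p) = l • p := by abel
    rw [h4, hlp, hu] at h3; linarith
  have h2 : |l| * s - 1 ≤ ‖u - l • p‖ := by
    have h3 := norm_sub_norm_le (l • p) u
    rw [hlp, hu, norm_sub_rev] at h3; linarith
  rcases le_or_gt 0 l with hl | hl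
  · have hl1 : |l| = l := abs_of_nonneg hl
    have hlq : |1 + l * q| = 1 + l * q :=
      abs_of_nonneg (by nlinarith [mul_nonneg hl hq0.le])
    rw [hl1] at h1
    rw [hlq, hl1]
    nlinarith [mul_nonneg hl (by linarith : (0:ℝ) ≤ 1 + q - s)]
  · obtain ⟨μ, hμ0, rfl⟩ : ∃ μ, 0 < μ ∧ l = -μ := ⟨-l, by linarith, by ring⟩
    have habsl : |(-μ)| = μ := by rw [abs_neg, abs_of_pos hμ0]
    have habsq : |1 + -μ * q| = |1 - μ * q| := by congr 1; ring
    rw [habsl] at h1 h2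
    rw [habsq, habsl]
    rcases le_or_gt (μ * q) 1 with hq' | hq'
    · have habs2 : |1 - μ * q| = 1 - μ * q := abs_of_nonneg (by linarith)
      rw [habs2]
      rcases le_or_gt (μ * s) 1 with hs' | hs'
      · -- small μ : value ≥ 2 - μ(s+q-1) ≥ 2 - γ
        have key : μ * (s + q - 1) ≤ γ := by
          have c1 : μ * (s + q - 1) * s ≤ (μ * s) * (γ * s) := by
            have hsq1 : 0 ≤ s + q - 1 := by linarith
            calc μ * (s + q - 1) * s = (μ * s) * (s + q - 1) := by ring
              _ ≤ (μ * s) * (γ * s) :=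
                  mul_le_mul_of_nonneg_left hγ (by positivity)
          have c2 : (μ * s) * (γ * s) ≤ γ * s := by
            nlinarith [mul_pos hμ0 hs0]
          have c3 : μ * (s + q - 1) * s ≤ γ * s := le_trans c1 c2
          exact le_of_mul_le_mul_right c3 hs0
        nlinarith
      · -- large μ : value ≥ μ(s+1-q) ≥ 2 - γ
        have key : 2 - γ ≤ μ * (s + 1 - q) := by
          have c0 : 0 ≤ s + 1 - q := by nlinarith
          have c1 : (2 - γ) * s ≤ s + 1 - q := by nlinarith
          have c2 : s + 1 - q ≤ (μ * s) * (s + 1 - q) := by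
            nlinarith
          have c3 : (2 - γ) * s ≤ (μ * (s + 1 - q)) * s := by nlinarith
          exact le_of_mul_le_mul_right c3 hs0
        nlinarith
    · -- μ q > 1 : μ ≥ 2
      have hμbig : 2 ≤ μ := by nlinarith
      have h5 := abs_nonneg (1 - μ * q)
      have h6 := norm_nonneg (u - (-μ) • p)
      nlinarith

end GurariiAux


open GurariiAux

variable {X : Type*} [NormedAddCommGroup X] [NormedSpace ℝ X]

lemma poly_coupling (ε : ℝ) (hε : 0 < ε) (hε1 : ε ≤ 1) :
    (1 - ε / 2) * (4 * ε) ≤ (1 - ε ^ 2 / 256) * 32 - (1 + ε ^ 2 / 256) * (32 + ε ^ 2 - 4 * ε) := by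
  nlinarith [sq_nonneg ε, pow_le_one₀ hε.le hε1 (n := 2), sq_nonneg (ε - 1)]

lemma poly_align (ε : ℝ) (hε : 0 < ε) (hε1 : ε ≤ 1) :
    (2 - ε + ε ^ 2 / 256) * (1 + ε ^ 2 / 256) ≤ 2 - ε / 4 := by
  nlinarith [sq_nonneg ε, pow_le_one₀ hε.le hε1 (n := 2), sq_nonneg (ε - 1)]

set_option maxHeartbeats 1000000 in
theorem gurarii_core (hX : IsGurarii X) (x y₀ : X) (hx : ‖x‖ = 1) (hy : ‖y₀‖ = 1)
    (ε : ℝ) (hε : 0 < ε) (hε1 : ε ≤ 1) :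
    ∃ y : X, ‖y‖ ≤ 1 ∧ 2 - ε ≤ ‖x + y‖ ∧
      ∀ g : X →L[ℝ] ℝ, ‖g‖ ≤ 1 → 1 - ε ^ 2 / 256 ≤ g y₀ → 1 - ε ≤ g y := by
  classical
  set B : ℝ := 32 + ε ^ 2 - 4 * ε with hBdef
  set s : ℝ := 32 / B with hsdef
  set q : ℝ := 4 * ε / B with hqdef
  set δ : ℝ := ε ^ 2 / 256 with hδdef
  have hB1 : 29 ≤ B := by nlinarith
  have hB2 : B ≤ 32 := by nlinarith
  have hB0 : 0 < B := by linarith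
  have hBne : B ≠ 0 := ne_of_gt hB0
  have hsB : s * B = 32 := by rw [hsdef]; exact div_mul_cancel₀ _ hBne
  have hqB : q * B = 4 * ε := by rw [hqdef]; exact div_mul_cancel₀ _ hBne
  have hs0 : 0 < s := by rw [hsdef]; exact div_pos (by norm_num) hB0
  have hq0 : 0 < q := by rw [hqdef]; exact div_pos (by linarith) hB0
  have hq1 : q ≤ 1 := by nlinarith [mul_le_mul_of_nonneg_left hB1 hq0.le]
  have hq2 : 2 * q ≤ 1 := by nlinarith [mul_le_mul_of_nonneg_left hB1 hq0.le]
  have hs1 : 1 ≤ s := by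
    by_contra h; push_neg at h; nlinarith [mul_lt_mul_of_pos_right h hB0]
  have hs2 : s ≤ 2 := by
    by_contra h; push_neg at h; nlinarith [mul_lt_mul_of_pos_right h hB0]
  have hsq : s ≤ 1 + q := by
    by_contra h; push_neg at h; nlinarith [mul_lt_mul_of_pos_right h hB0]
  have hδ0 : 0 < δ := by rw [hδdef]; positivity
  have hδ1 : δ ≤ 1 := by nlinarith
  have hδ' : 0 < 1 + δ := by linarith
  have hδε : δ * 2 ≤ ε := by nlinarith
  -- the subspace E
  set E : Subspace ℝ X := Submodule.span ℝ ({x, y₀} : Set X) with hEdef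
  haveI : FiniteDimensional ℝ E :=
    FiniteDimensional.span_of_finite ℝ ((Set.finite_singleton y₀).insert x)
  set xE : E := ⟨x, Submodule.subset_span (Set.mem_insert _ _)⟩ with hxEdef
  set yE : E := ⟨y₀, Submodule.subset_span (Set.mem_insert_of_mem _ rfl)⟩ with hyEdef
  have hxE : ‖xE‖ = 1 := hx
  have hyE : ‖yE‖ = 1 := hy
  set p : E := s • yE with hpdef
  have hp : ‖p‖ = s := by
    rw [hpdef, norm_smul, hyE, Real.norm_eq_abs, abs_of_pos hs0, mul_one]
  have hsq' : ‖p‖ ≤ 1 + q := by rw [hp]; exact hsq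
  have hs1' : 1 ≤ ‖p‖ := by rw [hp]; exact hs1
  have hγ : ‖p‖ + q - 1 ≤ (ε / 4) * ‖p‖ := by
    rw [hp]
    have e1 : (s + q - 1) * B = 8 * ε - ε ^ 2 := by
      rw [sub_mul, add_mul, hsB, hqB, one_mul, hBdef]; ring
    have e2 : ((ε / 4) * s) * B = 8 * ε := by
      rw [mul_assoc, hsB]; ring
    have h9 : (s + q - 1) * B ≤ ((ε / 4) * s) * B := by
      rw [e1, e2]; nlinarith
    linarith [le_of_mul_le_mul_right h9 hB0]
  -- the finite-dimensional model space
  let ψ : Shadow (Module.finrank ℝ (E × ℝ)) ≃ₗ[ℝ] (E × ℝ) :=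
    (shadowEquiv _).trans (Module.finBasis ℝ (E × ℝ)).equivFun.symm
  let NS : AddGroupNorm (Shadow (Module.finrank ℝ (E × ℝ))) :=
  { toFun := fun v => NN p q (ψ v)
    map_zero' := by rw [map_zero]; exact NN_zero
    add_le' := fun v w => by
      rw [map_add]; exact NN_add _ _
    neg' := fun v => by rw [map_neg]; exact NN_neg _
    eq_zero_of_map_eq_zero' := fun v h => by
      have h2 := abs_snd_le (p := p) hq0 hq1 (ψ v)
      have h3 := norm_fst_le (q := q) (p := p) (ψ v)
      rw [h] at h2 h3
      have e2 : (ψ v).2 = 0 := by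
        have := abs_nonneg (ψ v).2; have : |(ψ v).2| = 0 := le_antisymm (by linarith) (abs_nonneg _)
        exact abs_eq_zero.mp this
      have e1 : (ψ v).1 = 0 := by
        have h4 : ‖(ψ v).1‖ ≤ 0 := by
          have := norm_nonneg p; nlinarith
        exact norm_le_zero_iff.mp h4
      have : ψ v = 0 := Prod.ext e1 e2
      have := congrArg ψ.symm this
      rwa [LinearEquiv.symm_apply_apply, map_zero] at this }
  letI : NormedAddCommGroup (Shadow (Module.finrank ℝ (E × ℝ))) := NS.toNormedAddCommGroup
  have hnorm : ∀ v : Shadow (Module.finrank ℝ (E × ℝ)), ‖v‖ = NN p q (ψ v) := fun v => rfl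
  letI : NormedSpace ℝ (Shadow (Module.finrank ℝ (E × ℝ))) :=
  { norm_smul_le := fun r v => by
      rw [hnorm, hnorm, map_smul, NN_smul, Real.norm_eq_abs] }
  -- the subspace corresponding to E and the isometry back to X
  let E'' : Subspace ℝ (Shadow (Module.finrank ℝ (E × ℝ))) :=
    LinearMap.range ((ψ.symm : (E × ℝ) →ₗ[ℝ] _).comp (LinearMap.inl ℝ E ℝ))
  let TE : E'' →ₗᵢ[ℝ] X :=
  { toLinearMap := E.subtype.comp ((LinearMap.fst ℝ E ℝ).comp
      ((ψ : Shadow (Module.finrank ℝ (E × ℝ)) →ₗ[ℝ] (E × ℝ)).comp E''.subtype))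
    norm_map' := by
      have hsubnorm : ∀ v : E'', ‖v‖ = NN p q (ψ (v : Shadow (Module.finrank ℝ (E × ℝ)))) :=
        fun v => rfl
      rintro ⟨w, e, rfl⟩
      have hw : ψ ((ψ.symm : (E × ℝ) →ₗ[ℝ] _).comp (LinearMap.inl ℝ E ℝ) e)
          = (e, (0 : ℝ)) := by
        show ψ (ψ.symm (e, 0)) = (e, 0)
        exact ψ.apply_symm_apply _
      show ‖(((ψ ((ψ.symm : (E × ℝ) →ₗ[ℝ] _).comp (LinearMap.inl ℝ E ℝ) e)).1 : E) : X)‖ = _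
      rw [hsubnorm]
      show _ = NN p q (ψ ((ψ.symm : (E × ℝ) →ₗ[ℝ] _).comp (LinearMap.inl ℝ E ℝ) e))
      rw [hw, NN_fst hq0 hsq']
      rfl }
  obtain ⟨TF, hTFfix, hTFbd⟩ := hX δ hδ0 (Shadow (Module.finrank ℝ (E × ℝ))) E'' TE
  have hfix : ∀ e : E, TF (ψ.symm (e, 0)) = (e : X) := by
    intro e
    have hmem : ψ.symm (e, 0) ∈ E'' := ⟨e, rfl⟩
    have h1 := hTFfix ⟨ψ.symm (e, 0), hmem⟩
    have h2 : TE ⟨ψ.symm (e, 0), hmem⟩ = ((ψ (ψ.symm (e, 0))).1 : X) := rfl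
    rw [h2, ψ.apply_symm_apply] at h1
    exact h1
  set z1 := ψ.symm ((0 : E), (1 : ℝ)) with hz1def
  set u := TF z1 with hudef
  have hz1n : ‖z1‖ ≤ 1 := by
    rw [hnorm, hz1def, ψ.apply_symm_apply]; exact NN_le_one
  have hun : ‖u‖ ≤ 1 + δ := by
    have := (hTFbd z1).2
    have h2 : (1 + δ) * ‖z1‖ ≤ (1 + δ) * 1 := mul_le_mul_of_nonneg_left hz1n (by linarith)
    rw [mul_one] at h2
    linarith
  have hxu : 2 - ε + δ ≤ ‖x + u‖ := by
    have hadd : ψ.symm (xE, (1 : ℝ)) = ψ.symm (xE, 0) + z1 := by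
      rw [hz1def, ← map_add]
      congr 1
      rw [Prod.mk_add_mk, add_zero, zero_add]
    have heq : TF (ψ.symm (xE, (1 : ℝ))) = x + u := by
      rw [hadd, map_add, hfix xE, hudef]
    have hb := (hTFbd (ψ.symm (xE, (1 : ℝ)))).1
    rw [heq] at hb
    have hNval : 2 - ε / 4 ≤ ‖ψ.symm (xE, (1:ℝ))‖ := by
      rw [hnorm, ψ.apply_symm_apply]
      exact NN_align xE hxE hs1' hq0 hq2 hsq' (by linarith) hγ
    have hstep : (1 + δ)⁻¹ * (2 - ε / 4) ≤ (1 + δ)⁻¹ * ‖ψ.symm (xE, (1:ℝ))‖ :=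
      mul_le_mul_of_nonneg_left hNval (by positivity)
    have hfinal : 2 - ε + δ ≤ (1 + δ)⁻¹ * (2 - ε / 4) := by
      rw [← sub_nonneg]
      have hkey : (2 - ε + δ) * (1 + δ) ≤ 2 - ε / 4 := by
        rw [hδdef]; exact poly_align ε hε hε1
      have := mul_le_mul_of_nonneg_left hkey (le_of_lt (inv_pos.mpr hδ'))
      calc (0:ℝ) ≤ (1 + δ)⁻¹ * (2 - ε/4) - (1 + δ)⁻¹ * ((2 - ε + δ) * (1 + δ)) := by linarith
        _ = (1 + δ)⁻¹ * (2 - ε/4) - (2 - ε + δ) * ((1 + δ)⁻¹ * (1 + δ)) := by ring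
        _ = (1 + δ)⁻¹ * (2 - ε/4) - (2 - ε + δ) := by
            rw [inv_mul_cancel₀ (ne_of_gt hδ'), mul_one]
    linarith
  -- the output point
  refine ⟨(1 + δ)⁻¹ • u, ?_, ?_, ?_⟩
  · rw [norm_smul, Real.norm_eq_abs, abs_of_pos (inv_pos.mpr hδ')]
    calc (1 + δ)⁻¹ * ‖u‖ ≤ (1 + δ)⁻¹ * (1 + δ) :=
          mul_le_mul_of_nonneg_left hun (by positivity)
      _ = 1 := inv_mul_cancel₀ (ne_of_gt hδ')
  · have hdiff : ‖u - (1 + δ)⁻¹ • u‖ ≤ δ := by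
      have e1 : u - (1 + δ)⁻¹ • u = (1 - (1 + δ)⁻¹) • u := by
        rw [sub_smul, one_smul]
      rw [e1, norm_smul, Real.norm_eq_abs]
      have hc : 0 ≤ 1 - (1 + δ)⁻¹ := by
        have : (1 + δ)⁻¹ ≤ 1 := by
          rw [inv_le_one_iff₀]; right; linarith
        linarith
      rw [abs_of_nonneg hc]
      have hc2 : (1 - (1 + δ)⁻¹) * (1 + δ) = δ := by
        rw [sub_mul, one_mul, inv_mul_cancel₀ (ne_of_gt hδ')]; ring
      calc (1 - (1 + δ)⁻¹) * ‖u‖ ≤ (1 - (1 + δ)⁻¹) * (1 + δ) :=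
            mul_le_mul_of_nonneg_left hun hc
        _ = δ := hc2
    have e2 : (x + u) - (u - (1 + δ)⁻¹ • u) = x + (1 + δ)⁻¹ • u := by abel
    have h3 := norm_sub_norm_le (x + u) (u - (1 + δ)⁻¹ • u)
    rw [e2] at h3
    linarith
  · intro g hg hgy
    -- coupling through the vector (p, -q)
    have hcomp : (p, -q) = s • ((yE : E), (0:ℝ)) + (-q) • ((0:E), (1:ℝ)) := by
      rw [Prod.smul_mk, Prod.smul_mk, Prod.mk_add_mk, smul_zero, add_zero, smul_zero,
        zero_add, smul_eq_mul, mul_one]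
    have hvec : ψ.symm (p, -q) = s • ψ.symm (yE, (0:ℝ)) + (-q) • z1 := by
      rw [hz1def, ← map_smul, ← map_smul, ← map_add]
      exact congrArg ψ.symm hcomp
    have hTFvec : TF (ψ.symm (p, -q)) = s • y₀ + (-q) • u := by
      rw [hvec, map_add, map_smul, map_smul, hfix yE, hudef]
    have hnvec : ‖TF (ψ.symm (p, -q))‖ ≤ 1 + δ := by
      have hb := (hTFbd (ψ.symm (p, -q))).2
      have h4 : ‖ψ.symm (p, -q)‖ ≤ 1 := by
        rw [hnorm, ψ.apply_symm_apply]; exact NN_vec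
      have h5 : (1 + δ) * ‖ψ.symm (p, -q)‖ ≤ (1 + δ) * 1 :=
        mul_le_mul_of_nonneg_left h4 (by linarith)
      rw [mul_one] at h5
      linarith
    have hgval : s * g y₀ - q * g u ≤ 1 + δ := by
      have h6 : |g (s • y₀ + (-q) • u)| ≤ ‖g‖ * ‖TF (ψ.symm (p, -q))‖ := by
        rw [hTFvec, ← Real.norm_eq_abs]
        exact g.le_opNorm _
      have h7 : g (s • y₀ + (-q) • u) = s * g y₀ - q * g u := by
        rw [map_add, map_smul, map_smul, smul_eq_mul, smul_eq_mul]; ring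
      have h8 : ‖g‖ * ‖TF (ψ.symm (p, -q))‖ ≤ 1 * (1 + δ) := by
        apply mul_le_mul hg hnvec (norm_nonneg _) (by norm_num)
      rw [h7] at h6
      have := le_abs_self (s * g y₀ - q * g u)
      rw [one_mul] at h8
      linarith
    have hgu : 1 - ε / 2 ≤ g u := by
      have hkey : q * (1 - ε / 2) ≤ s * (1 - δ) - (1 + δ) := by
        have e3 : (q * (1 - ε / 2)) * B = (1 - ε / 2) * (4 * ε) := by
          calc (q * (1 - ε / 2)) * B = (1 - ε / 2) * (q * B) := by ring
            _ = (1 - ε / 2) * (4 * ε) := by rw [hqB]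
        have e4 : (s * (1 - δ) - (1 + δ)) * B = (1 - δ) * 32 - (1 + δ) * B := by
          calc (s * (1 - δ) - (1 + δ)) * B = (1 - δ) * (s * B) - (1 + δ) * B := by ring
            _ = (1 - δ) * 32 - (1 + δ) * B := by rw [hsB]
        have h9 : (q * (1 - ε / 2)) * B ≤ (s * (1 - δ) - (1 + δ)) * B := by
          rw [e3, e4, hBdef, hδdef]; exact poly_coupling ε hε hε1
        exact le_of_mul_le_mul_right h9 hB0
      have h10 : s * (1 - δ) ≤ s * g y₀ := by
        apply mul_le_mul_of_nonneg_left _ hs0.le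
        calc 1 - δ ≤ 1 - ε ^ 2 / 256 := by rw [hδdef]
          _ ≤ g y₀ := hgy
      have h11 : q * (1 - ε / 2) ≤ q * g u := by linarith
      exact le_of_mul_le_mul_left h11 hq0
    have h12 : g ((1 + δ)⁻¹ • u) = (1 + δ)⁻¹ * g u := by
      rw [map_smul, smul_eq_mul]
    rw [h12]
    have h13 : (1 - ε) * (1 + δ) ≤ g u := by
      have hεδ : 0 ≤ ε * δ := mul_nonneg hε.le hδ0.le
      have hexp : (1 - ε) * (1 + δ) = 1 + δ - ε - ε * δ := by ring
      linarith only [hgu, hεδ, hδε, hexp]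
    calc 1 - ε = (1 + δ)⁻¹ * ((1 - ε) * (1 + δ)) := by
          rw [mul_comm (1 - ε), ← mul_assoc, inv_mul_cancel₀ (ne_of_gt hδ'), one_mul]
      _ ≤ (1 + δ)⁻¹ * g u := mul_le_mul_of_nonneg_left h13 (by positivity)


/-- One can nearly norm a norm-one functional with a norm-one vector. -/
lemma exists_slice_point (f : X →L[ℝ] ℝ) (hf : ‖f‖ = 1) (δ : ℝ) (hδ0 : 0 < δ)
    (hδ1 : δ < 1) : ∃ y₀ : X, ‖y₀‖ = 1 ∧ 1 - δ < f y₀ := by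
  by_contra hcon
  push_neg at hcon
  have hb : ‖f‖ ≤ 1 - δ := by
    refine f.opNorm_le_bound (by linarith) (fun z => ?_)
    rcases eq_or_ne z 0 with rfl | hz
    · simp
    · have hz0 : 0 < ‖z‖ := norm_pos_iff.mpr hz
      have hu : ‖‖z‖⁻¹ • z‖ = 1 := norm_smul_inv_norm hz
      have h1 : f (‖z‖⁻¹ • z) ≤ 1 - δ := hcon _ hu
      have h2 : f (-(‖z‖⁻¹ • z)) ≤ 1 - δ := by
        have : ‖-(‖z‖⁻¹ • z)‖ = 1 := by rw [norm_neg]; exact hu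
        exact hcon _ this
      rw [map_neg] at h2
      have h3 : |f (‖z‖⁻¹ • z)| ≤ 1 - δ := abs_le.mpr ⟨by linarith, h1⟩
      have h4 : f (‖z‖⁻¹ • z) = ‖z‖⁻¹ * f z := by rw [map_smul, smul_eq_mul]
      rw [h4, abs_mul, abs_of_pos (inv_pos.mpr hz0)] at h3
      have h5 := mul_le_mul_of_nonneg_left h3 hz0.le
      rw [← mul_assoc, mul_inv_cancel₀ (ne_of_gt hz0), one_mul] at h5
      calc ‖f z‖ = |f z| := Real.norm_eq_abs _
        _ ≤ (1 - δ) * ‖z‖ := by rw [mul_comm] at h5; exact h5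
  rw [hf] at hb
  linarith

set_option maxHeartbeats 1000000 in
lemma slice_align (hX : IsGurarii X) (f : X →L[ℝ] ℝ) (hf : ‖f‖ = 1)
    (x : X) (hx : ‖x‖ = 1) (α ε : ℝ) (hα : 0 < α) (hε : 0 < ε) :
    ∃ y : X, ‖y‖ ≤ 1 ∧ 1 - α < f y ∧ 2 - ε < ‖x + y‖ := by
  obtain ⟨ε', hε'0, hε'1, hε'α, hε'ε⟩ :
      ∃ ε' : ℝ, 0 < ε' ∧ ε' ≤ 1 ∧ ε' < α ∧ ε' < ε := by
    refine ⟨min 1 (min α ε) / 2, ?_, ?_, ?_, ?_⟩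
    · have : 0 < min 1 (min α ε) := lt_min one_pos (lt_min hα hε)
      linarith
    · have := min_le_left 1 (min α ε)
      linarith
    · have h1 : min 1 (min α ε) ≤ α := (min_le_right _ _).trans (min_le_left _ _)
      have : 0 < min 1 (min α ε) := lt_min one_pos (lt_min hα hε)
      linarith
    · have h1 : min 1 (min α ε) ≤ ε := (min_le_right _ _).trans (min_le_right _ _)
      have : 0 < min 1 (min α ε) := lt_min one_pos (lt_min hα hε)
      linarith
  have hδ0 : 0 < ε' ^ 2 / 256 := by positivity
  have hδ1 : ε' ^ 2 / 256 < 1 := by nlinarith [sq_nonneg ε', hε'0, hε'1]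
  obtain ⟨y₀, hy₀n, hy₀f⟩ := exists_slice_point f hf _ hδ0 hδ1
  obtain ⟨y, hyn, hxy, hcl⟩ := gurarii_core hX x y₀ hx hy₀n ε' hε'0 hε'1
  refine ⟨y, hyn, ?_, ?_⟩
  · have := hcl f (le_of_eq hf) (le_of_lt hy₀f)
    linarith
  · linarith

open ContinuousLinearMap in
set_option maxHeartbeats 1000000 in
theorem gurarii_daugavet (hX : IsGurarii X) (T : X →L[ℝ] X)
    (hT : Module.finrank ℝ (LinearMap.range (T : X →ₗ[ℝ] X)) = 1) :
    ‖ContinuousLinearMap.id ℝ X + T‖ = 1 + ‖T‖ := by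
  classical
  -- extract a representation T = c' ⬝ x̂
  have hnt : Nontrivial (LinearMap.range (T : X →ₗ[ℝ] X)) := by
    apply Module.nontrivial_of_finrank_pos (R := ℝ)
    rw [hT]; norm_num
  obtain ⟨v, hv⟩ := exists_ne (0 : LinearMap.range (T : X →ₗ[ℝ] X))
  have hspan := (finrank_eq_one_iff_of_nonzero' v hv).mp hT
  set x₀ : X := (v : X) with hx₀def
  have hx₀ : x₀ ≠ 0 := fun h => hv (Subtype.ext h)
  obtain ⟨g₀, hg₀n, hg₀x⟩ := exists_dual_vector ℝ x₀ (norm_ne_zero_iff.mpr hx₀)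
  have hx₀n : 0 < ‖x₀‖ := norm_pos_iff.mpr hx₀
  set xh : X := ‖x₀‖⁻¹ • x₀ with hxhdef
  have hxh : ‖xh‖ = 1 := norm_smul_inv_norm hx₀
  set c' : X →L[ℝ] ℝ := g₀.comp T with hc'def
  have hrep : ∀ z : X, T z = c' z • xh := by
    intro z
    have hmem : T z ∈ LinearMap.range (T : X →ₗ[ℝ] X) := ⟨z, rfl⟩
    obtain ⟨c, hc⟩ := hspan ⟨T z, hmem⟩
    have hc2 : c • x₀ = T z := congrArg Subtype.val hc
    have hcval : c' z = c * ‖x₀‖ := by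
      rw [hc'def]
      show g₀ (T z) = c * ‖x₀‖
      rw [← hc2, map_smul, smul_eq_mul, hg₀x]
      norm_cast
    rw [hcval, hxhdef, ← hc2, smul_smul, mul_assoc,
      mul_inv_cancel₀ (ne_of_gt hx₀n), mul_one]
  have hTz : ∀ z : X, ‖T z‖ = |c' z| := by
    intro z
    rw [hrep z, norm_smul, Real.norm_eq_abs, hxh, mul_one]
  have hnorm_eq : ‖T‖ = ‖c'‖ := by
    refine le_antisymm ?_ ?_
    · refine T.opNorm_le_bound (norm_nonneg _) (fun z => ?_)
      rw [hTz z, ← Real.norm_eq_abs]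
      exact c'.le_opNorm z
    · refine c'.opNorm_le_bound (norm_nonneg _) (fun z => ?_)
      rw [Real.norm_eq_abs, ← hTz z]
      exact T.le_opNorm z
  set t : ℝ := ‖T‖ with htdef
  have ht0 : 0 < t := by
    rcases (norm_nonneg T).lt_or_eq with h | h
    · exact h
    · exfalso
      have hT0 : T = 0 := by
        rw [← norm_le_zero_iff]; rw [← h]
      rw [hT0] at hT
      have : (((0 : X →L[ℝ] X)) : X →ₗ[ℝ] X) = 0 := rfl
      rw [this, LinearMap.range_zero] at hT
      rw [finrank_bot] at hT
      exact absurd hT (by norm_num)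
  have htc : ‖c'‖ = t := hnorm_eq.symm
  -- upper bound
  refine le_antisymm ((norm_add_le _ _).trans (by
    have hid : ‖ContinuousLinearMap.id ℝ X‖ ≤ 1 := norm_id_le
    linarith)) ?_
  -- lower bound
  refine le_of_forall_pos_le_add (fun η hη => ?_)
  set f : X →L[ℝ] ℝ := t⁻¹ • c' with hfdef
  have hfn : ‖f‖ = 1 := by
    have hns : ‖t⁻¹ • c'‖ = ‖t⁻¹‖ * ‖c'‖ := norm_smul (α := ℝ) (β := X →L[ℝ] ℝ) t⁻¹ c'
    rw [hfdef, hns, Real.norm_eq_abs, abs_of_pos (inv_pos.mpr ht0), htc,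
      inv_mul_cancel₀ (ne_of_gt ht0)]
  obtain ⟨ε₀, hε₀0, hε₀η⟩ : ∃ ε₀ : ℝ, 0 < ε₀ ∧ 2 * ε₀ * (1 + t) ≤ η := by
    have h2 : 0 < 2 * (1 + t) := by linarith
    refine ⟨min 1 (η / (2 * (1 + t))) / 2, ?_, ?_⟩
    · have : 0 < min 1 (η / (2 * (1 + t))) := lt_min one_pos (by positivity)
      linarith
    · have h1 : min 1 (η / (2 * (1 + t))) / 2 ≤ η / (2 * (1 + t)) / 2 := by
        have := min_le_right 1 (η / (2 * (1 + t)))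
        linarith
      have h3 : (min 1 (η / (2 * (1 + t))) / 2) * (2 * (1 + t))
          ≤ (η / (2 * (1 + t)) / 2) * (2 * (1 + t)) :=
        mul_le_mul_of_nonneg_right h1 h2.le
      have h4 : (η / (2 * (1 + t)) / 2) * (2 * (1 + t)) = η / 2 := by
        field_simp
      rw [h4] at h3
      linarith [hη, h3]
  obtain ⟨y, hyn, hyf, hyx⟩ := slice_align hX f hfn xh hxh ε₀ ε₀ hε₀0 hε₀0
  -- now estimate ‖y + T y‖
  have hcy : c' y = t * f y := by
    rw [hfdef]
    show c' y = t * ((t⁻¹ • c') y)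
    rw [ContinuousLinearMap.smul_apply, smul_eq_mul, ← mul_assoc,
      mul_inv_cancel₀ (ne_of_gt ht0), one_mul]
  have hfy1 : f y ≤ 1 := by
    have h1 : |f y| ≤ ‖f‖ * ‖y‖ := by rw [← Real.norm_eq_abs]; exact f.le_opNorm y
    rw [hfn, one_mul] at h1
    have := le_abs_self (f y)
    linarith
  have hr1 : c' y ≤ t := by
    rw [hcy]
    have := mul_le_mul_of_nonneg_left hfy1 ht0.le
    linarith only [this]
  have hr2 : t * (1 - ε₀) ≤ c' y := by
    rw [hcy]
    exact mul_le_mul_of_nonneg_left (le_of_lt hyf) ht0.le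
  have key1 : 1 + t - ε₀ * (1 + t) ≤ ‖y + t • xh‖ := by
    rcases le_or_gt t 1 with hc | hc
    · have h1 : ‖y + t • xh‖ = ‖(xh + y) - (1 - t) • xh‖ := by
        congr 1
        rw [sub_smul, one_smul]; abel
      have h2 := norm_sub_norm_le (xh + y) ((1 - t) • xh)
      have h3 : ‖(1 - t) • xh‖ = 1 - t := by
        rw [norm_smul, Real.norm_eq_abs, hxh, mul_one, abs_of_nonneg (by linarith)]
      rw [← h1, h3] at h2
      have hε₀t : ε₀ * 1 ≤ ε₀ * (1 + t) :=
        mul_le_mul_of_nonneg_left (by linarith only [ht0]) hε₀0.le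
      rw [mul_one] at hε₀t
      linarith only [h2, hε₀t, hyx]
    · have h1 : ‖y + t • xh‖ = ‖t • (xh + y) - (t - 1) • y‖ := by
        congr 1
        rw [smul_add, sub_smul, one_smul]; abel
      have h2 := norm_sub_norm_le (t • (xh + y)) ((t - 1) • y)
      have h3 : ‖t • (xh + y)‖ = t * ‖xh + y‖ := by
        rw [norm_smul, Real.norm_eq_abs, abs_of_pos ht0]
      have h4 : ‖(t - 1) • y‖ ≤ t - 1 := by
        rw [norm_smul, Real.norm_eq_abs, abs_of_nonneg (by linarith)]
        have := mul_le_mul_of_nonneg_left hyn (by linarith only [hc] : (0:ℝ) ≤ t - 1)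
        linarith only [this]
      rw [← h1, h3] at h2
      have h5 : t * (2 - ε₀) ≤ t * ‖xh + y‖ :=
        mul_le_mul_of_nonneg_left (le_of_lt hyx) ht0.le
      have hm : t * ε₀ ≤ (1 + t) * ε₀ :=
        mul_le_mul_of_nonneg_right (by linarith only [ht0]) hε₀0.le
      linarith only [h2, h4, h5, hm]
  have key2 : 1 + t - 2 * ε₀ * (1 + t) ≤ ‖y + T y‖ := by
    have h1 : y + T y = (y + t • xh) - ((t - c' y) • xh) := by
      rw [hrep y, sub_smul]; abel
    have h2 := norm_sub_norm_le (y + t • xh) ((t - c' y) • xh)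
    have h3 : ‖(t - c' y) • xh‖ ≤ t * ε₀ := by
      rw [norm_smul, Real.norm_eq_abs, hxh, mul_one, abs_of_nonneg (by linarith only [hr1])]
      linarith only [hr2]
    rw [← h1] at h2
    have hm : t * ε₀ ≤ (1 + t) * ε₀ :=
      mul_le_mul_of_nonneg_right (by linarith only [ht0]) hε₀0.le
    linarith only [h2, h3, key1, hm]
  have hfin : ‖y + T y‖ ≤ ‖ContinuousLinearMap.id ℝ X + T‖ := by
    have h1 : (ContinuousLinearMap.id ℝ X + T) y = y + T y := by
      rw [ContinuousLinearMap.add_apply, ContinuousLinearMap.id_apply]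
    have h2 := (ContinuousLinearMap.id ℝ X + T).le_opNorm y
    rw [h1] at h2
    have h3 : ‖ContinuousLinearMap.id ℝ X + T‖ * ‖y‖ ≤ ‖ContinuousLinearMap.id ℝ X + T‖ * 1 :=
      mul_le_mul_of_nonneg_left hyn (norm_nonneg _)
    rw [mul_one] at h3
    linarith
  linarith


lemma cube_bound (θ : ℝ) (h1 : 0 < θ) (h2 : θ < 1) :
    1 - θ ≤ (1 - θ / 4) * (1 - θ / 4) * (1 - θ / 4) := by
  have h3 : θ * θ ≤ θ := by nlinarith
  have h4 : θ * θ * θ ≤ θ * θ := by nlinarith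
  nlinarith [h3, h4]

set_option maxHeartbeats 1600000 in
lemma multi_align (hX : IsGurarii X) (f : ℕ → (X →L[ℝ] ℝ)) (e : ℕ → ℝ)
    (hf : ∀ j, ‖f j‖ = 1) (he : ∀ j, 0 < e j) (m : ℕ) :
    ∀ η : ℝ, 0 < η → η < 1 →
    ∃ (h : X →L[ℝ] ℝ) (xs ys : ℕ → X) (v : X),
      ‖h‖ ≤ 1 ∧ ‖v‖ ≤ 1 ∧ 1 - η < h v ∧
      (∀ j, ‖xs j‖ ≤ 1 ∧ 1 - e j < f j (xs j) ∧ ‖ys j‖ ≤ 1 ∧ 1 - e j < f j (ys j)) ∧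
      (∀ j, j < m → 1 - η < h (xs j) ∧ h (ys j) < -(1 - η)) := by
  induction m with
  | zero =>
    intro η hη0 hη1
    have hpts : ∀ j : ℕ, ∃ z : X, ‖z‖ = 1 ∧ 1 - min (e j) 1 / 2 < f j z := by
      intro j
      refine exists_slice_point (f j) (hf j) _ ?_ ?_
      · have := lt_min (he j) one_pos; linarith
      · have := min_le_right (e j) 1; linarith
    choose pt hptn hptf using hpts
    have hmem : ∀ j, ‖pt j‖ ≤ 1 ∧ 1 - e j < f j (pt j) ∧ ‖pt j‖ ≤ 1 ∧ 1 - e j < f j (pt j) := by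
      intro j
      have h1 : min (e j) 1 / 2 ≤ e j := by
        have h2 := min_le_left (e j) 1
        have h3 : 0 ≤ min (e j) 1 := le_min (he j).le zero_le_one
        linarith
      have h4 : 1 - e j < f j (pt j) := by
        have := hptf j; linarith
      exact ⟨(hptn j).le, h4, (hptn j).le, h4⟩
    obtain ⟨v, hvn, hvf⟩ := exists_slice_point (f 0) (hf 0) (min η 1 / 2)
      (by have := lt_min hη0 one_pos; linarith)
      (by have := min_le_right η 1; linarith)
    refine ⟨f 0, pt, pt, v, le_of_eq (hf 0), hvn.le, ?_, hmem, ?_⟩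
    · have h5 : min η 1 / 2 ≤ η := by
        have h2 := min_le_left η 1
        have h3 : 0 ≤ min η 1 := le_min hη0.le zero_le_one
        linarith
      linarith
    · intro j hj; exact absurd hj (Nat.not_lt_zero j)
  | succ m IH =>
    intro η hη0 hη1
    -- parameters
    set M : ℝ := (m : ℝ) with hMdef
    have hM0 : 0 ≤ M := Nat.cast_nonneg m
    set K : ℝ := 2 * M + 2 with hKdef
    have hK0 : 0 < K := by linarith
    set θ : ℝ := η / (2 * K) with hθdef
    have hθ0 : 0 < θ := by rw [hθdef]; positivity
    have hθK : K * θ = η / 2 := by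
      rw [hθdef]
      field_simp
    have hθ2K : θ * (2 * K) = η := by
      rw [hθdef]; field_simp
    have h2K : 4 ≤ 2 * K := by linarith
    have hθη : θ ≤ η / 4 := by
      have h5 : θ * 4 ≤ θ * (2 * K) := mul_le_mul_of_nonneg_left h2K hθ0.le
      rw [hθ2K] at h5
      linarith
    have hθ1 : θ < 1 := by linarith
    set δ₁ : ℝ := θ / 4 with hδ₁def
    have hδ₁0 : 0 < δ₁ := by rw [hδ₁def]; linarith
    have hδ₁1 : δ₁ < 1 := by rw [hδ₁def]; linarith
    have hδ₁η : δ₁ ≤ η := by rw [hδ₁def]; linarith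
    obtain ⟨h, xs, ys, v, hhn, hvn, hhv, hmem, hal⟩ := IH δ₁ hδ₁0 hδ₁1
    -- the aggregated vector w
    set w : X := v + ∑ j ∈ Finset.range m, (xs j - ys j) with hwdef
    have hsum_ub : ∀ (g : X →L[ℝ] ℝ), ‖g‖ ≤ 1 → ∀ j, g (xs j - ys j) ≤ 2 := by
      intro g hg j
      have h1 : |g (xs j - ys j)| ≤ ‖g‖ * ‖xs j - ys j‖ := by
        rw [← Real.norm_eq_abs]; exact g.le_opNorm _
      have h2 : ‖xs j - ys j‖ ≤ 2 := by
        have := norm_sub_le (xs j) (ys j)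
        have := (hmem j).1; have := (hmem j).2.2.1
        linarith
      have h3 : ‖g‖ * ‖xs j - ys j‖ ≤ 1 * 2 := by
        apply mul_le_mul hg h2 (norm_nonneg _) zero_le_one
      have := le_abs_self (g (xs j - ys j))
      linarith
    have hhw : (2 * M + 1) * (1 - δ₁) < h w := by
      have h1 : h w = h v + ∑ j ∈ Finset.range m, h (xs j - ys j) := by
        rw [hwdef, map_add, map_sum]
      have h2 : ∀ j ∈ Finset.range m, 2 * (1 - δ₁) ≤ h (xs j - ys j) := by
        intro j hj
        rw [Finset.mem_range] at hj
        obtain ⟨ha, hb⟩ := hal j hj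
        rw [map_sub]
        linarith
      have h3 : (m : ℝ) * (2 * (1 - δ₁)) ≤ ∑ j ∈ Finset.range m, h (xs j - ys j) := by
        calc (m : ℝ) * (2 * (1 - δ₁)) = ∑ _j ∈ Finset.range m, 2 * (1 - δ₁) := by
              rw [Finset.sum_const, Finset.card_range, nsmul_eq_mul]
          _ ≤ _ := Finset.sum_le_sum h2
      rw [h1]
      rw [← hMdef] at h3
      linarith only [h3, hhv]
    have hwle : ‖w‖ ≤ 2 * M + 1 := by
      rw [hwdef]
      refine (norm_add_le _ _).trans ?_
      have h1 : ‖∑ j ∈ Finset.range m, (xs j - ys j)‖ ≤ ∑ _j ∈ Finset.range m, (2:ℝ) := by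
        refine (norm_sum_le _ _).trans (Finset.sum_le_sum ?_)
        intro j _
        have h2 := norm_sub_le (xs j) (ys j)
        have h3 := (hmem j).1; have h4 := (hmem j).2.2.1
        linarith
      rw [Finset.sum_const, Finset.card_range, nsmul_eq_mul, ← hMdef] at h1
      linarith
    have hub : ∀ (g : X →L[ℝ] ℝ), ‖g‖ ≤ 1 → ∀ z : X, g z ≤ ‖z‖ := by
      intro g hg z
      have h2 := g.le_opNorm z
      have h3 : ‖g‖ * ‖z‖ ≤ 1 * ‖z‖ := mul_le_mul_of_nonneg_right hg (norm_nonneg _)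
      have h4 := le_abs_self (g z)
      rw [Real.norm_eq_abs] at h2
      linarith
    have hlb : ∀ (g : X →L[ℝ] ℝ), ‖g‖ ≤ 1 → ∀ z : X, -‖z‖ ≤ g z := by
      intro g hg z
      have h2 := hub g hg (-z)
      rw [map_neg, norm_neg] at h2
      linarith
    have hw0 : 0 < ‖w‖ := by
      have h1 : h w ≤ ‖w‖ := hub h hhn w
      have hpos : 0 < (2 * M + 1) * (1 - δ₁) :=
        mul_pos (by linarith only [hM0]) (by linarith only [hδ₁1])
      linarith only [h1, hhw, hpos]
    have hwne : w ≠ 0 := fun h0 => by rw [h0, norm_zero] at hw0; exact lt_irrefl 0 hw0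
    set wh : X := ‖w‖⁻¹ • w with hwhdef
    have hwhn : ‖wh‖ = 1 := norm_smul_inv_norm hwne
    obtain ⟨xnew, hxnn, hxnf, hxnal⟩ :=
      slice_align hX (f m) (hf m) wh hwhn (e m) δ₁ (he m) hδ₁0
    have hne1 : wh + xnew ≠ 0 := by
      intro h0
      rw [h0, norm_zero] at hxnal
      linarith
    obtain ⟨h₁, hh₁n, hh₁v0⟩ := exists_dual_vector ℝ (wh + xnew) (norm_ne_zero_iff.mpr hne1)
    have hh₁v : h₁ (wh + xnew) = ‖wh + xnew‖ := by exact_mod_cast hh₁v0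
    have hh₁add : h₁ (wh + xnew) = h₁ wh + h₁ xnew := map_add _ _ _
    have hh₁wh : 1 - δ₁ < h₁ wh := by
      have h2 : h₁ xnew ≤ 1 := (hub h₁ hh₁n.le xnew).trans hxnn
      linarith only [hxnal, hh₁v, hh₁add, h2]
    have hh₁xn : 1 - δ₁ < h₁ xnew := by
      have h2 : h₁ wh ≤ 1 := (hub h₁ hh₁n.le wh).trans (le_of_eq hwhn)
      linarith only [hxnal, hh₁v, hh₁add, h2]
    set w₂ : X := w + xnew with hw₂def
    have hh₁w : ‖w‖ * (1 - δ₁) < h₁ w := by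
      have h1 : h₁ wh = ‖w‖⁻¹ * h₁ w := by rw [hwhdef, map_smul, smul_eq_mul]
      have h2 : h₁ w = ‖w‖ * h₁ wh := by
        rw [h1, ← mul_assoc, mul_inv_cancel₀ (ne_of_gt hw0), one_mul]
      rw [h2]
      exact mul_lt_mul_of_pos_left hh₁wh hw0
    have hw₂lb : (2 * M + 2) * (1 - δ₁) * (1 - δ₁) < ‖w₂‖ := by
      have h1 : h₁ w₂ = h₁ w + h₁ xnew := by rw [hw₂def, map_add]
      have h2 : h₁ w₂ ≤ ‖w₂‖ := hub h₁ hh₁n.le w₂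
      have h3 : (2 * M + 1) * (1 - δ₁) < ‖w‖ := by
        have h4 : h w ≤ ‖w‖ := hub h hhn w
        linarith only [hhw, h4]
      have h5 : (2 * M + 1) * (1 - δ₁) * (1 - δ₁) < h₁ w := by
        have h6 : (2 * M + 1) * (1 - δ₁) * (1 - δ₁) ≤ ‖w‖ * (1 - δ₁) :=
          mul_le_mul_of_nonneg_right h3.le (by linarith only [hδ₁1])
        linarith only [h6, hh₁w]
      have h7 : (1 - δ₁) * (1 - δ₁) ≤ h₁ xnew := by
        have h8 : (1 - δ₁) * (1 - δ₁) ≤ 1 * (1 - δ₁) :=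
          mul_le_mul_of_nonneg_right (by linarith only [hδ₁0]) (by linarith only [hδ₁1])
        linarith only [h8, hh₁xn]
      linarith only [h5, h7, h1, h2]
    have hw₂0 : 0 < ‖w₂‖ := by
      have hpos : 0 < (2 * M + 2) * (1 - δ₁) * (1 - δ₁) :=
        mul_pos (mul_pos (by linarith only [hM0]) (by linarith only [hδ₁1]))
          (by linarith only [hδ₁1])
      linarith only [hpos, hw₂lb]
    have hw₂ne : w₂ ≠ 0 := fun h0 => by rw [h0, norm_zero] at hw₂0; exact lt_irrefl 0 hw₂0
    set wh₂ : X := ‖w₂‖⁻¹ • w₂ with hwh₂def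
    have hwh₂n : ‖wh₂‖ = 1 := norm_smul_inv_norm hw₂ne
    have hwh₂n' : ‖-wh₂‖ = 1 := by rw [norm_neg]; exact hwh₂n
    obtain ⟨ynew, hynn, hynf, hynal⟩ :=
      slice_align hX (f m) (hf m) (-wh₂) hwh₂n' (e m) δ₁ (he m) hδ₁0
    have hne2 : -wh₂ + ynew ≠ 0 := by
      intro h0
      rw [h0, norm_zero] at hynal
      linarith
    obtain ⟨h₂, hh₂n, hh₂v0⟩ := exists_dual_vector ℝ (-wh₂ + ynew) (norm_ne_zero_iff.mpr hne2)
    have hh₂v : h₂ (-wh₂ + ynew) = ‖-wh₂ + ynew‖ := by exact_mod_cast hh₂v0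
    have hh₂add : h₂ (-wh₂ + ynew) = h₂ (-wh₂) + h₂ ynew := map_add _ _ _
    have hh₂wh : 1 - δ₁ < h₂ (-wh₂) := by
      have h2 : h₂ ynew ≤ 1 := (hub h₂ hh₂n.le ynew).trans hynn
      linarith [hynal, hh₂v, hh₂add]
    have hh₂yn : 1 - δ₁ < h₂ ynew := by
      have h2 : h₂ (-wh₂) ≤ 1 := (hub h₂ hh₂n.le (-wh₂)).trans (le_of_eq hwh₂n')
      linarith [hynal, hh₂v, hh₂add]
    set hst : X →L[ℝ] ℝ := -h₂ with hstdef
    have hstn : ‖hst‖ ≤ 1 := by rw [hstdef, norm_neg, hh₂n]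
    have hstwh₂ : 1 - δ₁ < hst wh₂ := by
      have h1 : hst wh₂ = h₂ (-wh₂) := by
        rw [hstdef, ContinuousLinearMap.neg_apply, ← map_neg]
      rw [h1]; exact hh₂wh
    have hstw₂ : ‖w₂‖ * (1 - δ₁) < hst w₂ := by
      have h1 : hst wh₂ = ‖w₂‖⁻¹ * hst w₂ := by rw [hwh₂def, map_smul, smul_eq_mul]
      have h2 : hst w₂ = ‖w₂‖ * hst wh₂ := by
        rw [h1, ← mul_assoc, mul_inv_cancel₀ (ne_of_gt hw₂0), one_mul]
      rw [h2]
      exact mul_lt_mul_of_pos_left hstwh₂ hw₂0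
    have hcube : 1 - θ ≤ (1 - δ₁) * (1 - δ₁) * (1 - δ₁) := by
      rw [hδ₁def]
      exact cube_bound θ hθ0 hθ1
    have key : (2 * M + 2) * (1 - θ) < hst w₂ := by
      have h1 : (2 * M + 2) * (1 - θ) ≤ (2 * M + 2) * ((1 - δ₁) * (1 - δ₁) * (1 - δ₁)) :=
        mul_le_mul_of_nonneg_left hcube (by linarith)
      have h2 : (2 * M + 2) * ((1 - δ₁) * (1 - δ₁) * (1 - δ₁))
          = ((2 * M + 2) * (1 - δ₁) * (1 - δ₁)) * (1 - δ₁) := by ring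
      have h3 : ((2 * M + 2) * (1 - δ₁) * (1 - δ₁)) * (1 - δ₁) < ‖w₂‖ * (1 - δ₁) :=
        mul_lt_mul_of_pos_right hw₂lb (by linarith only [hδ₁1])
      linarith only [h1, h2, h3, hstw₂]
    have hsplit : hst w₂
        = hst v + (∑ j ∈ Finset.range m, hst (xs j - ys j)) + hst xnew := by
      rw [hw₂def, hwdef, map_add, map_add, map_sum]
    have hstv : hst v ≤ 1 := (hub hst hstn v).trans hvn
    have hterm_ub : ∀ j, hst (xs j - ys j) ≤ 2 := hsum_ub hst hstn
    have hS_ub : (∑ j ∈ Finset.range m, hst (xs j - ys j)) ≤ 2 * M := by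
      calc (∑ j ∈ Finset.range m, hst (xs j - ys j)) ≤ ∑ _j ∈ Finset.range m, (2:ℝ) :=
            Finset.sum_le_sum (fun j _ => hterm_ub j)
        _ = M * 2 := by rw [Finset.sum_const, Finset.card_range, nsmul_eq_mul, ← hMdef]
        _ = 2 * M := by ring
    have hKθexp : (2 * M + 2) * (1 - θ) = 2 * M + 2 - η / 2 := by
      have : (2 * M + 2) * (1 - θ) = 2 * M + 2 - K * θ := by rw [hKdef]; ring
      rw [this, hθK]
    have hxnal2 : 1 - η / 2 < hst xnew := by
      have hk2 := key
      rw [hKθexp] at hk2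
      linarith only [hk2, hsplit, hstv, hS_ub]
    have hrest : ∀ j, j < m → 2 - η / 2 < hst (xs j - ys j) := by
      intro j hj
      have hjm : j ∈ Finset.range m := Finset.mem_range.mpr hj
      have hsplit2 : (∑ x ∈ (Finset.range m).erase j, hst (xs x - ys x)) + hst (xs j - ys j)
          = ∑ x ∈ Finset.range m, hst (xs x - ys x) := Finset.sum_erase_add _ _ hjm
      have hcard : ((Finset.range m).erase j).card = m - 1 := by
        rw [Finset.card_erase_of_mem hjm, Finset.card_range]
      have hm1 : 1 ≤ m := Nat.one_le_iff_ne_zero.mpr (by omega)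
      have herase_ub : (∑ x ∈ (Finset.range m).erase j, hst (xs x - ys x)) ≤ 2 * (M - 1) := by
        calc (∑ x ∈ (Finset.range m).erase j, hst (xs x - ys x))
            ≤ ∑ _x ∈ (Finset.range m).erase j, (2:ℝ) :=
              Finset.sum_le_sum (fun x _ => hterm_ub x)
          _ = ((m - 1 : ℕ) : ℝ) * 2 := by rw [Finset.sum_const, hcard, nsmul_eq_mul]
          _ = (M - 1) * 2 := by
              rw [Nat.cast_sub hm1, Nat.cast_one, ← hMdef]
          _ = 2 * (M - 1) := by ring
      have hxnub : hst xnew ≤ 1 := (hub hst hstn xnew).trans hxnn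
      have h1 := key
      rw [hKθexp] at h1
      linarith only [h1, hsplit, hsplit2, hstv, hxnub, herase_ub]
    -- assemble the new data
    refine ⟨hst, Function.update xs m xnew, Function.update ys m ynew, xnew,
      hstn, hxnn, ?_, ?_, ?_⟩
    · linarith only [hxnal2, hη0]
    · intro j
      rcases eq_or_ne j m with rfl | hjm
      · rw [Function.update_self, Function.update_self]
        exact ⟨hxnn, hxnf, hynn, hynf⟩
      · rw [Function.update_of_ne hjm, Function.update_of_ne hjm]
        exact hmem j
    · intro j hj
      rcases Nat.lt_succ_iff_lt_or_eq.mp hj with hj' | rfl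
      · have hjm : j ≠ m := Nat.ne_of_lt hj'
        rw [Function.update_of_ne hjm, Function.update_of_ne hjm]
        have h1 := hrest j hj'
        have h4 : hst (xs j - ys j) = hst (xs j) - hst (ys j) := map_sub _ _ _
        have h2 : -(1:ℝ) ≤ hst (ys j) := by
          have := hlb hst hstn (ys j)
          have := (hmem j).2.2.1
          linarith
        have h5 : hst (xs j) ≤ 1 := (hub hst hstn _).trans (hmem j).1
        constructor
        · linarith only [h1, h2, h4, hη0]
        · linarith only [h1, h5, h4, hη0]
      · rw [Function.update_self, Function.update_self]
        constructor
        · linarith only [hxnal2, hη0]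
        · have h6 : hst ynew = -(h₂ ynew) := by
            rw [hstdef, ContinuousLinearMap.neg_apply]
          rw [h6]
          linarith only [hh₂yn, hδ₁η]


set_option maxHeartbeats 1000000 in
theorem gurarii_sd2p (hX : IsGurarii X) : HasStrongDiameterTwoProperty X := by
  intro n hn S lam hS hlam hsum
  classical
  choose f e hfn he hSeq using hS
  set i0 : Fin n := ⟨0, hn⟩ with hi0
  set f' : ℕ → (X →L[ℝ] ℝ) := fun j => if hj : j < n then f ⟨j, hj⟩ else f i0 with hf'def
  set e' : ℕ → ℝ := fun j => if hj : j < n then e ⟨j, hj⟩ else 1 with he'def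
  have hf' : ∀ j, ‖f' j‖ = 1 := by
    intro j; rw [hf'def]; dsimp only; split <;> apply hfn
  have he' : ∀ j, 0 < e' j := by
    intro j; rw [he'def]; dsimp only; split
    · exact he _
    · norm_num
  have hf'i : ∀ i : Fin n, f' (i : ℕ) = f i := by
    intro i; rw [hf'def]; dsimp only; rw [dif_pos i.isLt]
  have he'i : ∀ i : Fin n, e' (i : ℕ) = e i := by
    intro i; rw [he'def]; dsimp only; rw [dif_pos i.isLt]
  have hmemS : ∀ (i : Fin n) (z : X), ‖z‖ ≤ 1 → 1 - e i < f i z → z ∈ S i := by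
    intro i z h1 h2
    rw [hSeq i]
    exact ⟨Metric.mem_closedBall.mpr (by rw [dist_zero_right]; exact h1), h2⟩
  set A : Set X := {z : X | ∃ x : Fin n → X, (∀ i, x i ∈ S i) ∧ z = ∑ i, lam i • x i}
    with hAdef
  have hAball : A ⊆ Metric.closedBall (0 : X) 1 := by
    rintro z ⟨xx, hxx, rfl⟩
    rw [Metric.mem_closedBall, dist_zero_right]
    calc ‖∑ i, lam i • xx i‖ ≤ ∑ i, ‖lam i • xx i‖ := norm_sum_le _ _
      _ ≤ ∑ i, lam i := by
          refine Finset.sum_le_sum (fun i _ => ?_)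
          have hx1 : ‖xx i‖ ≤ 1 := by
            have := hxx i
            rw [hSeq i] at this
            have h2 := this.1
            rwa [Metric.mem_closedBall, dist_zero_right] at h2
          rw [norm_smul, Real.norm_eq_abs, abs_of_nonneg (hlam i)]
          calc lam i * ‖xx i‖ ≤ lam i * 1 := mul_le_mul_of_nonneg_left hx1 (hlam i)
            _ = lam i := mul_one _
      _ = 1 := hsum
  refine le_antisymm ?_ ?_
  · refine Metric.diam_le_of_forall_dist_le (by norm_num) (fun z hz z' hz' => ?_)
    have h1 := hAball hz; have h2 := hAball hz'
    rw [Metric.mem_closedBall, dist_zero_right] at h1 h2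
    calc dist z z' = ‖z - z'‖ := dist_eq_norm _ _
      _ ≤ ‖z‖ + ‖z'‖ := norm_sub_le _ _
      _ ≤ 2 := by linarith
  · refine le_of_forall_pos_le_add (fun η hη => ?_)
    obtain ⟨η', hη'0, hη'1, hη'η⟩ : ∃ η' : ℝ, 0 < η' ∧ η' < 1 ∧ 2 * η' ≤ η := by
      refine ⟨min η 1 / 2, ?_, ?_, ?_⟩
      · have := lt_min hη one_pos; linarith
      · have := min_le_right η 1; linarith
      · have := min_le_left η 1; linarith
    obtain ⟨h, xs, ys, v, hhn, -, -, hmem, hal⟩ := multi_align hX f' e' hf' he' n η' hη'0 hη'1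
    have hxsS : ∀ i : Fin n, xs (i : ℕ) ∈ S i := by
      intro i
      have h1 := (hmem (i : ℕ)).1
      have h2 := (hmem (i : ℕ)).2.1
      rw [hf'i i, he'i i] at h2
      exact hmemS i _ h1 h2
    have hysS : ∀ i : Fin n, ys (i : ℕ) ∈ S i := by
      intro i
      have h1 := (hmem (i : ℕ)).2.2.1
      have h2 := (hmem (i : ℕ)).2.2.2
      rw [hf'i i, he'i i] at h2
      exact hmemS i _ h1 h2
    set z₁ : X := ∑ i, lam i • xs (i : ℕ) with hz₁def
    set z₂ : X := ∑ i, lam i • ys (i : ℕ) with hz₂def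
    have hz₁A : z₁ ∈ A := ⟨fun i => xs (i : ℕ), hxsS, rfl⟩
    have hz₂A : z₂ ∈ A := ⟨fun i => ys (i : ℕ), hysS, rfl⟩
    have hdist : 2 - 2 * η' ≤ dist z₁ z₂ := by
      have h1 : h (z₁ - z₂) = ∑ i, lam i * (h (xs (i : ℕ)) - h (ys (i : ℕ))) := by
        rw [map_sub, hz₁def, hz₂def, map_sum, map_sum, ← Finset.sum_sub_distrib]
        congr 1
        ext i
        rw [map_smul, map_smul, smul_eq_mul, smul_eq_mul]
        ring
      have h2 : ∑ i, lam i * (2 - 2 * η') ≤ ∑ i, lam i * (h (xs (i : ℕ)) - h (ys (i : ℕ))) := by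
        refine Finset.sum_le_sum (fun i _ => ?_)
        refine mul_le_mul_of_nonneg_left ?_ (hlam i)
        have h3 := (hal (i : ℕ) i.isLt).1
        have h4 := (hal (i : ℕ) i.isLt).2
        linarith
      have h5 : ∑ i, lam i * (2 - 2 * η') = 2 - 2 * η' := by
        rw [← Finset.sum_mul, hsum, one_mul]
      have h6 : h (z₁ - z₂) ≤ ‖z₁ - z₂‖ := by
        have h7 := h.le_opNorm (z₁ - z₂)
        have h8 : ‖h‖ * ‖z₁ - z₂‖ ≤ 1 * ‖z₁ - z₂‖ :=
          mul_le_mul_of_nonneg_right hhn (norm_nonneg _)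
        have h9 := le_abs_self (h (z₁ - z₂))
        rw [Real.norm_eq_abs] at h7
        linarith
      rw [dist_eq_norm]
      linarith only [h1, h2, h5, h6]
    have hbdd : Bornology.IsBounded A := Metric.isBounded_closedBall.subset hAball
    have hdd := Metric.dist_le_diam_of_mem hbdd hz₁A hz₂A
    linarith only [hdd, hdist, hη'η, hη]


end GurariiProof

theorem gurarii_daugavet_and_strongDiameterTwo
    (X : Type*) [NormedAddCommGroup X] [NormedSpace ℝ X] [CompleteSpace X]
    (hX : IsGurarii X) :
    HasDaugavetProperty X ∧ HasStrongDiameterTwoProperty X := by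
  exact ⟨fun T hT => gurarii_daugavet hX T hT, gurarii_sd2p hX⟩
end

section
/- Every infinite-dimensional Lindenstrauss space has the strong diameter 2 property. That is, if X is an infinite-dimensional real Banach space whose dual X* is isometrically isomorphic to L¹(μ) for some measure μ, then every finite convex combination of slices of the closed unit ball B_X has diameter 2. -/
universe u v

open Metric Set

section SD2PAux
open MeasureTheory Filter

variable {α : Type*} [MeasurableSpace α] {μ : MeasureTheory.Measure α}


variable {α : Type*} [MeasurableSpace α] {μ : Measure α}

lemma atom_dichotomy (A : Set α) (hA : MeasurableSet A)
    (hatom : ∀ S : Set α, MeasurableSet S → S ⊆ A → μ S = 0 ∨ μ (A \ S) = 0)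
    (S : Set α) (hS : MeasurableSet S) (hSA : S ⊆ A) : μ S = 0 ∨ μ S = μ A := by
  rcases hatom S hS hSA with h | h
  · exact Or.inl h
  · right
    have h2 := measure_inter_add_diff (μ := μ) A hS
    rw [inter_eq_self_of_subset_right hSA] at h2
    rw [h, add_zero] at h2
    exact h2

/-- On an "atom" A, a measurable function is a.e. constant. -/
lemma ae_const_on_atom (A : Set α) (hA : MeasurableSet A) (hfin : μ A ≠ ⊤) (hpos : μ A ≠ 0)
    (hatom : ∀ S : Set α, MeasurableSet S → S ⊆ A → μ S = 0 ∨ μ (A \ S) = 0)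
    (f : α → ℝ) (hf : Measurable f) :
    ∃ c : ℝ, μ (A ∩ {a | f a ≠ c}) = 0 := by
  have meas : ∀ q : ℝ, MeasurableSet (A ∩ {a | q < f a}) :=
    fun q => hA.inter (measurableSet_lt measurable_const hf)
  have dich : ∀ q : ℝ, μ (A ∩ {a | q < f a}) = 0 ∨ μ (A ∩ {a | q < f a}) = μ A :=
    fun q => atom_dichotomy A hA hatom _ (meas q) inter_subset_left
  set Q : Set ℝ := {q | μ (A ∩ {a | q < f a}) = 0} with hQ
  have hQmem : ∀ q q' : ℝ, q ∈ Q → q ≤ q' → q' ∈ Q := by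
    intro q q' hq hle
    have : A ∩ {a | q' < f a} ⊆ A ∩ {a | q < f a} := by
      apply inter_subset_inter_right
      intro a ha
      simp only [mem_setOf_eq] at ha ⊢
      linarith
    exact measure_mono_null this hq
  -- Q is nonempty
  have hQne : Q.Nonempty := by
    by_contra hfalse
    rw [not_nonempty_iff_eq_empty] at hfalse
    have hall : ∀ m : ℕ, μ (A ∩ {a | (m : ℝ) < f a}) = μ A := by
      intro m
      rcases dich m with h | h
      · exact absurd (hQ ▸ h : (m:ℝ) ∈ Q) (by simp [hfalse])
      · exact h
    have hanti : Antitone (fun m : ℕ => A ∩ {a | (m : ℝ) < f a}) := by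
      intro m k hmk
      apply inter_subset_inter_right
      intro a ha
      simp only [mem_setOf_eq] at ha ⊢
      have : (m : ℝ) ≤ (k : ℝ) := by exact_mod_cast hmk
      linarith
    have hiInter : μ (⋂ m : ℕ, A ∩ {a | (m : ℝ) < f a}) = ⨅ m : ℕ, μ (A ∩ {a | (m : ℝ) < f a}) :=
      hanti.measure_iInter (fun m => (meas m).nullMeasurableSet)
        ⟨0, by rw [hall 0]; exact hfin⟩
    have hempty : (⋂ m : ℕ, A ∩ {a | (m : ℝ) < f a}) = ∅ := by
      ext a
      simp only [mem_iInter, mem_inter_iff, mem_setOf_eq, mem_empty_iff_false, iff_false,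
        not_forall]
      obtain ⟨m, hm⟩ := exists_nat_gt (f a)
      exact ⟨m, fun h => absurd h.2 (not_lt.mpr hm.le)⟩
    have : ⨅ m : ℕ, μ (A ∩ {a | (m : ℝ) < f a}) = μ A := by
      simp only [hall, iInf_const]
    rw [hempty, measure_empty, this] at hiInter
    exact hpos hiInter.symm
  -- Q is bounded below
  have hQbdd : BddBelow Q := by
    have hUnion : (⋃ m : ℕ, A ∩ {a | (-(m:ℝ)) < f a}) = A := by
      ext a
      simp only [mem_iUnion, mem_inter_iff, mem_setOf_eq]
      constructor
      · rintro ⟨m, hm, _⟩; exact hm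
      · intro ha
        obtain ⟨m, hm⟩ := exists_nat_gt (-(f a))
        exact ⟨m, ha, by linarith⟩
    have hexm : ∃ m : ℕ, μ (A ∩ {a | (-(m:ℝ)) < f a}) ≠ 0 := by
      by_contra hfalse
      push_neg at hfalse
      exact hpos (by rw [← hUnion]; exact measure_iUnion_null hfalse)
    obtain ⟨m, hm⟩ := hexm
    refine ⟨-(m:ℝ), fun q hq => ?_⟩
    by_contra hlt
    push_neg at hlt
    exact hm (hQmem q (-(m:ℝ)) hq hlt.le)
  -- the constant
  set c := sInf Q with hc
  refine ⟨c, ?_⟩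
  have hsplit : A ∩ {a | f a ≠ c} ⊆
      (⋃ j : ℕ, A ∩ {a | c + (1:ℝ)/(j+1) < f a}) ∪ (⋃ j : ℕ, A ∩ {a | f a ≤ c - (1:ℝ)/(j+1)}) := by
    rintro a ⟨haA, hane⟩
    simp only [mem_setOf_eq] at hane
    rcases lt_or_gt_of_ne hane with h | h
    · right
      obtain ⟨j, hj⟩ := exists_nat_one_div_lt (show (0:ℝ) < c - f a by linarith)
      refine mem_iUnion.mpr ⟨j, haA, ?_⟩
      simp only [mem_setOf_eq]
      have : (1:ℝ)/(j+1) < c - f a := by exact_mod_cast hj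
      linarith
    · left
      obtain ⟨j, hj⟩ := exists_nat_one_div_lt (show (0:ℝ) < f a - c by linarith)
      refine mem_iUnion.mpr ⟨j, haA, ?_⟩
      simp only [mem_setOf_eq]
      have : (1:ℝ)/(j+1) < f a - c := by exact_mod_cast hj
      linarith
  refine measure_mono_null hsplit (measure_union_null ?_ ?_)
  · refine measure_iUnion_null fun j => ?_
    have hpos' : (0:ℝ) < (1:ℝ)/(j+1) := by positivity
    obtain ⟨q, hqQ, hqlt⟩ := exists_lt_of_csInf_lt hQne
      (show sInf Q < c + 1/(j+1) by rw [← hc]; linarith)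
    refine measure_mono_null ?_ hqQ
    apply inter_subset_inter_right
    intro a ha
    simp only [mem_setOf_eq] at ha ⊢
    have : q < c + 1/(j+1) := by rw [hc]; exact hqlt
    linarith
  · refine measure_iUnion_null fun j => ?_
    have hq : (c - (1:ℝ)/(j+1)) ∉ Q := by
      intro hmem
      have := csInf_le hQbdd hmem
      rw [← hc] at this
      have hpos' : (0:ℝ) < (1:ℝ)/(j+1) := by positivity
      linarith
    rcases dich (c - (1:ℝ)/(j+1)) with h | h
    · exact absurd h hq
    · -- complement has measure zero
      have h2 := measure_inter_add_diff (μ := μ) A (meas (c - (1:ℝ)/(j+1)))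
      rw [inter_eq_self_of_subset_right inter_subset_left, h] at h2
      have hdiffzero : μ (A \ (A ∩ {a | c - (1:ℝ)/(j+1) < f a})) = 0 := by
        have h3 : μ A + μ (A \ (A ∩ {a | c - (1:ℝ)/(j+1) < f a})) = μ A + 0 := by
          rw [add_zero]; exact h2
        exact (ENNReal.add_right_inj hfin).mp h3
      refine measure_mono_null ?_ hdiffzero
      rintro a ⟨haA, hale⟩
      exact ⟨haA, fun hmem => absurd hmem.2 (by simp only [mem_setOf_eq] at hale ⊢; linarith [hale])⟩


def DisjFam (μ : MeasureTheory.Measure α) (m : ℕ) (A : Fin m → Set α) : Prop :=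
  (∀ i, MeasurableSet (A i)) ∧ (∀ i j, i ≠ j → Disjoint (A i) (A j)) ∧
  (∀ i, 0 < μ (A i)) ∧ (∀ i, μ (A i) < ⊤)


lemma Lp_coeFn_sum {ι : Type*} (s : Finset ι) (F : ι → MeasureTheory.Lp ℝ 1 μ) :
    ⇑(∑ i ∈ s, F i) =ᵐ[μ] fun a => ∑ i ∈ s, (F i : α → ℝ) a := by
  classical
  induction s using Finset.induction_on with
  | empty => simp only [Finset.sum_empty]; exact MeasureTheory.Lp.coeFn_zero ℝ 1 μ
  | insert _ _ hnotmem ih =>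
    rename_i x s
    rw [Finset.sum_insert hnotmem]
    filter_upwards [MeasureTheory.Lp.coeFn_add (F x) (∑ i ∈ s, F i), ih] with a ha1 ha2
    rw [Finset.sum_insert hnotmem, ha1, Pi.add_apply, ha2]

lemma split_atom {n : ℕ} (A : Fin n → Set α) (hA : DisjFam μ n A) (k : Fin n)
    (S : Set α) (hS : MeasurableSet S) (hSA : S ⊆ A k)
    (h1 : μ S ≠ 0) (h2 : μ (A k \ S) ≠ 0) :
    ∃ B : Fin (n+1) → Set α, DisjFam μ (n+1) B := by
  classical
  refine ⟨Fin.cons (A k \ S) (Function.update A k S), ?_, ?_, ?_, ?_⟩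
  · intro i
    refine Fin.cases ?_ (fun j => ?_) i
    · simpa using (hA.1 k).diff hS
    · simp only [Fin.cons_succ]
      rcases eq_or_ne j k with rfl | hjk
      · simpa [Function.update_self] using hS
      · simpa [Function.update_of_ne hjk] using hA.1 j
  · have key : ∀ j : Fin n, Disjoint (A k \ S) (Function.update A k S j) := by
      intro j
      rcases eq_or_ne j k with rfl | hjk
      · simp only [Function.update_self]
        exact disjoint_sdiff_left.mono_left le_rfl
      · rw [Function.update_of_ne hjk]
        exact (hA.2.1 k j (Ne.symm hjk)).mono_left diff_subset
    have key2 : ∀ i j : Fin n, i ≠ j →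
        Disjoint (Function.update A k S i) (Function.update A k S j) := by
      intro i j hij
      rcases eq_or_ne i k with rfl | hik
      · rw [Function.update_self, Function.update_of_ne (Ne.symm hij)]
        exact (hA.2.1 i j hij).mono_left hSA
      · rcases eq_or_ne j k with rfl | hjk
        · rw [Function.update_self, Function.update_of_ne hik]
          exact (hA.2.1 i j hij).mono_right hSA
        · rw [Function.update_of_ne hik, Function.update_of_ne hjk]
          exact hA.2.1 i j hij
    intro i j hij
    induction i using Fin.cases with
    | zero =>
      induction j using Fin.cases with
      | zero => exact absurd rfl hij
      | succ j' => simpa using key j'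
    | succ i' =>
      induction j using Fin.cases with
      | zero => simpa using (key i').symm
      | succ j' =>
        have hne : i' ≠ j' := fun h => hij (by rw [h])
        simpa using key2 i' j' hne
  · intro i
    refine Fin.cases ?_ (fun j => ?_) i
    · simpa using pos_iff_ne_zero.mpr h2
    · simp only [Fin.cons_succ]
      rcases eq_or_ne j k with rfl | hjk
      · simpa [Function.update_self] using pos_iff_ne_zero.mpr h1
      · simpa [Function.update_of_ne hjk] using hA.2.2.1 j
  · intro i
    refine Fin.cases ?_ (fun j => ?_) i
    · simp only [Fin.cons_zero]
      exact lt_of_le_of_lt (measure_mono diff_subset) (hA.2.2.2 k)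
    · simp only [Fin.cons_succ]
      rcases eq_or_ne j k with rfl | hjk
      · simp only [Function.update_self]
        exact lt_of_le_of_lt (measure_mono hSA) (hA.2.2.2 j)
      · simpa [Function.update_of_ne hjk] using hA.2.2.2 j

lemma extend_fam {n : ℕ} (A : Fin n → Set α) (hA : DisjFam μ n A)
    (T : Set α) (hT : MeasurableSet T) (hTU : ∀ i, Disjoint T (A i))
    (h1 : μ T ≠ 0) (h2 : μ T < ⊤) :
    ∃ B : Fin (n+1) → Set α, DisjFam μ (n+1) B := by
  refine ⟨Fin.cons T A, fun i => ?_, ?_, fun i => ?_, fun i => ?_⟩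
  · induction i using Fin.cases with
    | zero => simpa using hT
    | succ j => simpa using hA.1 j
  · intro i j hij
    induction i using Fin.cases with
    | zero =>
      induction j using Fin.cases with
      | zero => exact absurd rfl hij
      | succ j' => simpa using hTU j'
    | succ i' =>
      induction j using Fin.cases with
      | zero => simpa using (hTU i').symm
      | succ j' =>
        have hne : i' ≠ j' := fun h => hij (by rw [h])
        simpa using hA.2.1 i' j' hne
  · induction i using Fin.cases with
    | zero => simpa using pos_iff_ne_zero.mpr h1
    | succ j => simpa using hA.2.2.1 j
  · induction i using Fin.cases with
    | zero => simpa using h2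
    | succ j => simpa using hA.2.2.2 j

lemma findim_of_no_disjfam (N : ℕ) (hN : ¬ ∃ A : Fin N → Set α, DisjFam μ N A) :
    FiniteDimensional ℝ (MeasureTheory.Lp ℝ 1 μ) := by
  classical
  set P : ℕ → Prop := fun m => ∃ A : Fin m → Set α, DisjFam μ m A with hP
  have hP0 : P 0 := ⟨fun _ => ∅, fun i => i.elim0, fun i => i.elim0, fun i => i.elim0,
    fun i => i.elim0⟩
  set n := Nat.findGreatest P N with hn
  have hPn : P n := Nat.findGreatest_spec (Nat.zero_le N) hP0
  have hnN : n ≠ N := fun h => hN (show P N from h ▸ hPn)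
  have hnltN : n < N := lt_of_le_of_ne (Nat.findGreatest_le N) hnN
  have hmax : ¬ P (n + 1) :=
    Nat.findGreatest_is_greatest (Nat.lt_succ_self n) hnltN
  obtain ⟨A, hA⟩ := hPn
  -- each A k is an atom
  have hatom : ∀ k, ∀ S : Set α, MeasurableSet S → S ⊆ A k → μ S = 0 ∨ μ (A k \ S) = 0 := by
    intro k S hS hSA
    by_contra hcon
    push_neg at hcon
    exact hmax (split_atom A hA k S hS hSA hcon.1 hcon.2)
  -- every integrable measurable function vanishes a.e. off U
  set U := ⋃ k, A k with hU
  have hsupp : ∀ f : α → ℝ, Measurable f → Integrable f μ → μ ({a | f a ≠ 0} \ U) = 0 := by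
    intro f hfm hfi
    have hsub : ({a | f a ≠ 0} \ U) ⊆ ⋃ m : ℕ, ({a | 1/((m:ℝ)+1) ≤ |f a|} \ U) := by
      rintro a ⟨ha, haU⟩
      simp only [mem_setOf_eq] at ha
      have : 0 < |f a| := abs_pos.mpr ha
      obtain ⟨m, hm⟩ := exists_nat_one_div_lt this
      refine mem_iUnion.mpr ⟨m, ⟨?_, haU⟩⟩
      show 1/((m:ℝ)+1) ≤ |f a|
      have hm' : 1/((m:ℝ)+1) < |f a| := by push_cast at hm ⊢; linarith
      linarith
    refine measure_mono_null hsub (measure_iUnion_null fun m => ?_)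
    by_contra hpos
    have hmeasT : MeasurableSet ({a | 1/((m:ℝ)+1) ≤ |f a|} \ U) :=
      ((measurableSet_le measurable_const hfm.abs)).diff
        (MeasurableSet.iUnion fun k => hA.1 k)
    have hfinT : μ ({a | 1/((m:ℝ)+1) ≤ |f a|} \ U) < ⊤ := by
      refine lt_of_le_of_lt (measure_mono ?_) (hfi.abs.measure_ge_lt_top
        (show (0:ℝ) < 1/((m:ℝ)+1) by positivity))
      exact fun a ha => ha.1
    have hdisj : ∀ i, Disjoint ({a | 1/((m:ℝ)+1) ≤ |f a|} \ U) (A i) := by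
      intro i
      refine disjoint_left.mpr fun a ha hai => ha.2 (mem_iUnion.mpr ⟨i, hai⟩)
    exact hmax (extend_fam A hA _ hmeasT hdisj hpos hfinT)
  -- the indicator functions span Lp
  set e : Fin n → MeasureTheory.Lp ℝ 1 μ := fun k =>
    indicatorConstLp 1 (hA.1 k) (hA.2.2.2 k).ne (1 : ℝ) with he
  have hspan : ∀ g : MeasureTheory.Lp ℝ 1 μ, ∃ c : Fin n → ℝ, g = ∑ k, c k • e k := by
    intro g
    have hgi : Integrable (g : α → ℝ) μ := MeasureTheory.L1.integrable_coeFn g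
    set f' := (MeasureTheory.Lp.aestronglyMeasurable g).mk (g : α → ℝ) with hf'
    have hgf' : (g : α → ℝ) =ᵐ[μ] f' := (MeasureTheory.Lp.aestronglyMeasurable g).ae_eq_mk
    have hf'm : Measurable f' :=
      (MeasureTheory.Lp.aestronglyMeasurable g).stronglyMeasurable_mk.measurable
    have hf'i : Integrable f' μ := hgi.congr hgf'
    have hc : ∀ k : Fin n, ∃ c : ℝ, μ (A k ∩ {a | f' a ≠ c}) = 0 := fun k =>
      ae_const_on_atom (A k) (hA.1 k) (hA.2.2.2 k).ne (hA.2.2.1 k).ne' (hatom k) f' hf'm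
    choose c hc using hc
    refine ⟨c, ?_⟩
    apply MeasureTheory.Lp.ext
    have hbad : μ (({a | f' a ≠ 0} \ U) ∪ ⋃ k, (A k ∩ {a | f' a ≠ c k})) = 0 :=
      measure_union_null (hsupp f' hf'm hf'i) (measure_iUnion_null hc)
    have hsum : ⇑(∑ k, c k • e k) =ᵐ[μ] fun a => ∑ k, c k * (A k).indicator (fun _ => (1:ℝ)) a := by
      refine (Lp_coeFn_sum Finset.univ (fun k => c k • e k)).trans ?_
      have : ∀ k : Fin n, ⇑(c k • e k) =ᵐ[μ] fun a => c k * (A k).indicator (fun _ => (1:ℝ)) a := by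
        intro k
        filter_upwards [MeasureTheory.Lp.coeFn_smul (c k) (e k),
          indicatorConstLp_coeFn (p := (1:ENNReal)) (hs := hA.1 k) (hμs := (hA.2.2.2 k).ne)
            (c := (1:ℝ))] with a h1 h2
        rw [h1, Pi.smul_apply, h2, smul_eq_mul]
      have hall := MeasureTheory.ae_all_iff.mpr this
      filter_upwards [hall] with a ha
      rw [Finset.sum_congr rfl fun k _ => ha k]
    refine hgf'.trans (Filter.EventuallyEq.trans ?_ hsum.symm)
    have hnull := MeasureTheory.measure_eq_zero_iff_ae_notMem.mp hbad
    filter_upwards [hnull] with a ha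
    simp only [mem_union, mem_diff, mem_iUnion, mem_inter_iff, mem_setOf_eq, not_or,
      not_exists, not_and, not_not] at ha
    obtain ⟨ha1, ha2⟩ := ha
    by_cases haU : a ∈ U
    · obtain ⟨k, hak⟩ := mem_iUnion.mp haU
      have hfa : f' a = c k := ha2 k hak
      have : ∀ j : Fin n, j ≠ k → c j * (A j).indicator (fun _ => (1:ℝ)) a = 0 := by
        intro j hjk
        have : a ∉ A j := fun haj => disjoint_left.mp (hA.2.1 j k hjk) haj hak
        simp [indicator_of_notMem this]
      rw [Finset.sum_eq_single k (fun j _ hj => this j hj) (fun h => absurd (Finset.mem_univ k) h)]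
      simp [indicator_of_mem hak, hfa]
    · have hfa : f' a = 0 := by
        by_contra hne
        exact haU (ha1 hne)
      rw [hfa]
      symm
      apply Finset.sum_eq_zero
      intro j _
      have : a ∉ A j := fun haj => haU (mem_iUnion.mpr ⟨j, haj⟩)
      simp [indicator_of_notMem this]
  -- conclude finite-dimensionality
  have : Submodule.span ℝ (Set.range e) = ⊤ := by
    rw [Submodule.eq_top_iff']
    intro g
    obtain ⟨c, hc⟩ := hspan g
    rw [hc]
    exact Submodule.sum_mem _ fun k _ =>
      Submodule.smul_mem _ _ (Submodule.subset_span (mem_range_self k))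
  have : Module.Finite ℝ (MeasureTheory.Lp ℝ 1 μ) := by
    rw [Module.finite_def]
    exact ⟨(Finset.univ.image e), by
      rw [Finset.coe_image, Finset.coe_univ, Set.image_univ]; exact this⟩
  exact this

lemma exists_small_set (hinf : ¬ FiniteDimensional ℝ (MeasureTheory.Lp ℝ 1 μ))
    (H : α → ℝ) (hHi : Integrable H μ) (hH0 : 0 ≤ᵐ[μ] H) {δ : ℝ} (hδ : 0 < δ) :
    ∃ A : Set α, MeasurableSet A ∧ μ A ≠ 0 ∧ μ A ≠ ⊤ ∧ ∫ a in A, H a ∂μ < δ := by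
  set N : ℕ := ⌈(∫ a, H a ∂μ)/δ⌉₊ + 1 with hN
  have hfam : ∃ A : Fin N → Set α, DisjFam μ N A := by
    by_contra h
    exact hinf (findim_of_no_disjfam N h)
  obtain ⟨A, hA⟩ := hfam
  by_contra hcon
  push_neg at hcon
  have hge : ∀ k : Fin N, δ ≤ ∫ a in A k, H a ∂μ := fun k =>
    hcon (A k) (hA.1 k) (hA.2.2.1 k).ne' (hA.2.2.2 k).ne
  have hsum : ∫ a in ⋃ k, A k, H a ∂μ = ∑ k : Fin N, ∫ a in A k, H a ∂μ :=
    integral_iUnion_fintype (hA.1) (fun i j hij => hA.2.1 i j hij)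
      (fun k => hHi.integrableOn)
  have hle : ∫ a in ⋃ k, A k, H a ∂μ ≤ ∫ a, H a ∂μ :=
    setIntegral_le_integral hHi hH0
  have hNδ : (N : ℝ) * δ ≤ ∫ a, H a ∂μ := by
    calc (N : ℝ) * δ = ∑ _k : Fin N, δ := by simp [mul_comm]
      _ ≤ ∑ k : Fin N, ∫ a in A k, H a ∂μ := Finset.sum_le_sum fun k _ => hge k
      _ = ∫ a in ⋃ k, A k, H a ∂μ := hsum.symm
      _ ≤ ∫ a, H a ∂μ := hle
  have hNgt : (∫ a, H a ∂μ)/δ < (N : ℝ) := by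
    rw [hN]
    push_cast
    calc (∫ a, H a ∂μ)/δ ≤ (⌈(∫ a, H a ∂μ)/δ⌉₊ : ℝ) := Nat.le_ceil _
      _ < (⌈(∫ a, H a ∂μ)/δ⌉₊ : ℝ) + 1 := lt_add_one _
  have := (div_lt_iff₀ hδ).mp hNgt
  linarith

lemma abs_min_integrable (f g : MeasureTheory.Lp ℝ 1 μ) :
    Integrable (fun a => |f a| ⊓ |g a|) μ := by
  refine Integrable.mono' (MeasureTheory.L1.integrable_coeFn f).abs ?_ ?_
  · have h1 := (MeasureTheory.Lp.aestronglyMeasurable f).norm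
    have h2 := (MeasureTheory.Lp.aestronglyMeasurable g).norm
    simp only [Real.norm_eq_abs] at h1 h2
    exact h1.inf h2
  · refine Filter.Eventually.of_forall fun a => ?_
    rw [Real.norm_eq_abs, abs_of_nonneg (le_min (abs_nonneg _) (abs_nonneg _))]
    exact min_le_left _ _

lemma norm_add_ge_aux (f g : MeasureTheory.Lp ℝ 1 μ) (d : ℝ)
    (hd : ∫ a, |f a| ⊓ |g a| ∂μ ≤ d) : ‖f‖ + ‖g‖ - 2*d ≤ ‖f + g‖ := by
  have hfi := MeasureTheory.L1.integrable_coeFn f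
  have hgi := MeasureTheory.L1.integrable_coeFn g
  have hnorm : ‖f + g‖ = ∫ a, |f a + g a| ∂μ := by
    rw [MeasureTheory.L1.norm_eq_integral_norm]
    refine integral_congr_ae ?_
    filter_upwards [MeasureTheory.Lp.coeFn_add f g] with a ha
    rw [ha, Pi.add_apply, Real.norm_eq_abs]
  have hptwise : ∀ a : α, |f a| + |g a| - 2 * min |f a| |g a| ≤ |f a + g a| := by
    intro a
    have h1 : |f a| + |g a| - 2 * min |f a| |g a| = max |f a| |g a| - min |f a| |g a| := by
      rw [← max_add_min |f a| |g a|]; ring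
    have h2 : max |f a| |g a| - min |f a| |g a| = abs (|g a| - |f a|) := max_sub_min_eq_abs _ _
    have h3 : abs (|g a| - |f a|) ≤ |g a - -(f a)| := by
      simpa using abs_abs_sub_abs_le_abs_sub (g a) (-(f a))
    rw [h1, h2]
    calc abs (|g a| - |f a|) ≤ |g a - -(f a)| := h3
      _ = |f a + g a| := by rw [sub_neg_eq_add, add_comm]
  have hintgr : Integrable (fun a => |f a| + |g a|) μ := by
    have := hfi.abs.add hgi.abs
    exact this
  have habs : Integrable (fun a => |f a + g a|) μ := by
    have := (hfi.add hgi).abs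
    simpa using this
  have hint : ∫ a, (|f a| + |g a| - 2 * (|f a| ⊓ |g a|)) ∂μ ≤ ∫ a, |f a + g a| ∂μ := by
    refine integral_mono ?_ habs hptwise
    exact hintgr.sub ((abs_min_integrable f g).const_mul 2)
  have heq : ∫ a, (|f a| + |g a| - 2 * (|f a| ⊓ |g a|)) ∂μ
      = ∫ a, (|f a| + |g a|) ∂μ - 2 * ∫ a, (|f a| ⊓ |g a|) ∂μ := by
    rw [integral_sub hintgr ((abs_min_integrable f g).const_mul 2), MeasureTheory.integral_const_mul]
  have heq2 : ∫ a, (|f a| + |g a|) ∂μ = ∫ a, |f a| ∂μ + ∫ a, |g a| ∂μ :=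
    integral_add hfi.abs hgi.abs
  have hnf : ‖f‖ = ∫ a, |f a| ∂μ := by
    rw [MeasureTheory.L1.norm_eq_integral_norm]
    simp_rw [Real.norm_eq_abs]
  have hng : ‖g‖ = ∫ a, |g a| ∂μ := by
    rw [MeasureTheory.L1.norm_eq_integral_norm]
    simp_rw [Real.norm_eq_abs]
  rw [hnorm, hnf, hng]
  rw [heq] at hint
  linarith

lemma L1_octahedral (hinf : ¬ FiniteDimensional ℝ (MeasureTheory.Lp ℝ 1 μ))
    {n : ℕ} (F : Fin n → MeasureTheory.Lp ℝ 1 μ) {δ : ℝ} (hδ : 0 < δ) :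
    ∃ g : MeasureTheory.Lp ℝ 1 μ, ‖g‖ = 1 ∧
      ∀ i, ‖F i‖ + 1 - δ ≤ ‖F i + g‖ ∧ ‖F i‖ + 1 - δ ≤ ‖F i - g‖ := by
  set H : α → ℝ := fun a => ∑ i, |(F i : α → ℝ) a| with hH
  have hHi : Integrable H μ :=
    integrable_finset_sum _ (fun i _ => (MeasureTheory.L1.integrable_coeFn (F i)).abs)
  have hH0 : 0 ≤ᵐ[μ] H :=
    Filter.Eventually.of_forall fun a => Finset.sum_nonneg fun i _ => abs_nonneg _
  obtain ⟨A, hAm, hA0, hAtop, hAint⟩ := exists_small_set hinf H hHi hH0 (half_pos hδ)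
  have htR : 0 < (μ A).toReal := ENNReal.toReal_pos hA0 hAtop
  set c : ℝ := ((μ A).toReal)⁻¹ with hc
  set g : MeasureTheory.Lp ℝ 1 μ := indicatorConstLp 1 hAm hAtop c with hg
  have hgnorm : ‖g‖ = 1 := by
    rw [hg, norm_indicatorConstLp one_ne_zero ENNReal.one_ne_top]
    simp only [ENNReal.toReal_one, one_div, inv_one, Real.rpow_one]
    rw [Real.norm_eq_abs, hc, abs_of_pos (inv_pos.mpr htR)]
    rw [show μ.real A = (μ A).toReal from rfl, inv_mul_cancel₀ htR.ne']
  have hgcoe : ⇑g =ᵐ[μ] A.indicator (fun _ => c) := indicatorConstLp_coeFn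
  -- the key min bound, uniform in i
  have hminbd : ∀ i : Fin n, ∫ a, |(F i : α → ℝ) a| ⊓ |(g : α → ℝ) a| ∂μ ≤ δ/2 := by
    intro i
    have hmono : (fun a => |(F i : α → ℝ) a| ⊓ |(g : α → ℝ) a|) ≤ᵐ[μ] A.indicator H := by
      filter_upwards [hgcoe] with a ha
      by_cases hmem : a ∈ A
      · rw [indicator_of_mem hmem]
        refine le_trans inf_le_left ?_
        exact Finset.single_le_sum (f := fun j => |(F j : α → ℝ) a|)
          (fun j _ => abs_nonneg _) (Finset.mem_univ i)
      · rw [indicator_of_notMem hmem, ha, indicator_of_notMem hmem]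
        simp [abs_nonneg]
    have hint := integral_mono_ae (abs_min_integrable (F i) g) (hHi.indicator hAm) hmono
    rw [integral_indicator hAm] at hint
    exact le_of_lt (lt_of_le_of_lt hint hAint)
  refine ⟨g, hgnorm, fun i => ?_⟩
  constructor
  · have := norm_add_ge_aux (F i) g (δ/2) (hminbd i)
    rw [hgnorm] at this
    linarith
  · have hneg : ∫ a, |(F i : α → ℝ) a| ⊓ |((-g : MeasureTheory.Lp ℝ 1 μ) : α → ℝ) a| ∂μ ≤ δ/2 := by
      refine le_trans (le_of_eq (integral_congr_ae ?_)) (hminbd i)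
      filter_upwards [MeasureTheory.Lp.coeFn_neg g] with a ha
      rw [ha, Pi.neg_apply, abs_neg]
    have := norm_add_ge_aux (F i) (-g) (δ/2) hneg
    rw [norm_neg, hgnorm] at this
    rw [sub_eq_add_neg (F i) g]
    linarith


end SD2PAux

section SD2PAux2

variable {W : Type*} [NormedAddCommGroup W] [NormedSpace ℝ W]

lemma exists_unit_lt (T : W →L[ℝ] ℝ) {c : ℝ} (h : c < ‖T‖) :
    ∃ x : W, ‖x‖ ≤ 1 ∧ c < T x := by
  by_contra hcon
  push_neg at hcon
  have habs : ∀ x : W, ‖x‖ ≤ 1 → |T x| ≤ c := by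
    intro x hx
    rcases abs_cases (T x) with ⟨heq, _⟩ | ⟨heq, _⟩
    · rw [heq]; exact hcon x hx
    · rw [heq]
      have := hcon (-x) (by rwa [norm_neg])
      rw [map_neg] at this
      linarith
  have hc0 : 0 ≤ c := by
    have := habs 0 (by simp)
    simp at this
    linarith [abs_nonneg (T (0:W)), this]
  have : ‖T‖ ≤ c := by
    refine ContinuousLinearMap.opNorm_le_bound T hc0 fun x => ?_
    rcases eq_or_ne x 0 with rfl | hx
    · simp
    · have hnx : 0 < ‖x‖ := norm_pos_iff.mpr hx
      have h1 : ‖(‖x‖⁻¹ • x : W)‖ ≤ 1 := by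
        rw [norm_smul, norm_inv, norm_norm, inv_mul_cancel₀ hnx.ne']
      have h2 := habs _ h1
      rw [map_smul, smul_eq_mul, abs_mul, abs_inv, abs_norm] at h2
      rw [Real.norm_eq_abs]
      calc |T x| = ‖x‖ * (‖x‖⁻¹ * |T x|) := by field_simp
        _ ≤ ‖x‖ * c := by
            exact mul_le_mul_of_nonneg_left h2 (norm_nonneg x)
        _ = c * ‖x‖ := mul_comm _ _
  linarith

end SD2PAux2


theorem lindenstrauss_strongDiameterTwoProperty
    (X : Type u) [NormedAddCommGroup X] [NormedSpace ℝ X] [CompleteSpace X]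
    (hinf : ¬ FiniteDimensional ℝ X) (hX : IsLindenstrauss X) :
    HasStrongDiameterTwoProperty X := by
  obtain ⟨β, m, μ, ⟨e⟩⟩ := hX
  have hdual : ¬ FiniteDimensional ℝ (X →L[ℝ] ℝ) := by
    intro h
    apply hinf
    haveI : FiniteDimensional ℝ (StrongDual ℝ X) := h
    exact FiniteDimensional.of_injective
      (NormedSpace.inclusionInDoubleDualLi ℝ (E := X)).toLinearMap
      (NormedSpace.inclusionInDoubleDualLi ℝ (E := X)).injective
  have hLp : ¬ FiniteDimensional ℝ (MeasureTheory.Lp ℝ 1 μ) := by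
    intro h
    haveI := h
    exact hdual (Module.Finite.equiv e.symm.toLinearEquiv)
  have hball : ∀ v : X, ‖v‖ ≤ 1 → v ∈ closedBall (0:X) 1 := fun v hv => by
    rwa [mem_closedBall, dist_zero_right]
  intro n hn S lam hSlice hlam hsum
  choose f ε hf hε hSeq using hSlice
  haveI : Nonempty (Fin n) := ⟨⟨0, hn⟩⟩
  set D := {z : X | ∃ x : Fin n → X, (∀ i, x i ∈ S i) ∧ z = ∑ i, lam i • x i} with hD
  -- elements of slices are in the unit ball
  have hSball : ∀ i, ∀ z ∈ S i, ‖z‖ ≤ 1 ∧ 1 - ε i < f i z := by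
    intro i z hz
    rw [hSeq i] at hz
    exact ⟨by simpa [mem_closedBall, dist_eq_norm] using hz.1, hz.2⟩
  -- upper bound for diameter
  have hDnorm : ∀ z ∈ D, ‖z‖ ≤ 1 := by
    rintro z ⟨x, hx, rfl⟩
    calc ‖∑ i, lam i • x i‖ ≤ ∑ i, ‖lam i • x i‖ := norm_sum_le _ _
      _ ≤ ∑ i, lam i := by
          refine Finset.sum_le_sum fun i _ => ?_
          rw [norm_smul, Real.norm_eq_abs, abs_of_nonneg (hlam i)]
          calc lam i * ‖x i‖ ≤ lam i * 1 :=
              mul_le_mul_of_nonneg_left (hSball i (x i) (hx i)).1 (hlam i)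
            _ = lam i := mul_one _
      _ = 1 := hsum
  have hupper : Metric.diam D ≤ 2 := by
    refine Metric.diam_le_of_forall_dist_le (by norm_num) fun z hz w hw => ?_
    calc dist z w = ‖z - w‖ := dist_eq_norm z w
      _ ≤ ‖z‖ + ‖w‖ := norm_sub_le z w
      _ ≤ 2 := by linarith [hDnorm z hz, hDnorm w hw]
  -- lower bound
  have hlower : ∀ η : ℝ, 0 < η → 2 - η ≤ Metric.diam D := by
    intro η hη
    set ε₀ : ℝ := Finset.univ.inf' Finset.univ_nonempty ε with hε₀
    have hε₀pos : 0 < ε₀ := by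
      rw [hε₀]
      exact (Finset.lt_inf'_iff _).mpr fun i _ => hε i
    set δ : ℝ := min (η/4) (ε₀/4) with hδdef
    have hδpos : 0 < δ := lt_min (by linarith) (by linarith)
    obtain ⟨g, hg1, hkey⟩ := L1_octahedral hLp (fun i => e (f i)) hδpos
    set G : X →L[ℝ] ℝ := e.symm g with hG
    have hGnorm : ‖G‖ = 1 := by rw [hG, e.symm.norm_map]; exact hg1
    have hkey' : ∀ i, 2 - δ ≤ ‖f i + G‖ ∧ 2 - δ ≤ ‖f i - G‖ := by
      intro i
      have h1 : e (f i + G) = e (f i) + g := by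
        rw [map_add, hG, e.apply_symm_apply]
      have h2 : e (f i - G) = e (f i) - g := by
        rw [map_sub, hG, e.apply_symm_apply]
      have h3 : ‖e (f i)‖ = 1 := by rw [e.norm_map]; exact hf i
      constructor
      · rw [← e.norm_map (f i + G), h1]
        have := (hkey i).1
        rw [h3] at this
        linarith
      · rw [← e.norm_map (f i - G), h2]
        have := (hkey i).2
        rw [h3] at this
        linarith
    -- choose points in slices
    have hx : ∀ i : Fin n, ∃ x : X, ‖x‖ ≤ 1 ∧ 2 - 2*δ < (f i + G) x :=
      fun i => exists_unit_lt _ (lt_of_lt_of_le (by linarith) (hkey' i).1)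
    have hy : ∀ i : Fin n, ∃ y : X, ‖y‖ ≤ 1 ∧ 2 - 2*δ < (f i - G) y :=
      fun i => exists_unit_lt _ (lt_of_lt_of_le (by linarith) (hkey' i).2)
    choose x hx1 hx2 using hx
    choose y hy1 hy2 using hy
    have hb : ∀ (T : X →L[ℝ] ℝ) (v : X), ‖T‖ = 1 → ‖v‖ ≤ 1 → T v ≤ 1 := by
      intro T v hT hv
      calc T v ≤ |T v| := le_abs_self _
        _ ≤ ‖T‖ * ‖v‖ := by rw [← Real.norm_eq_abs]; exact T.le_opNorm v
        _ ≤ 1 := by rw [hT]; linarith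
    have hfx : ∀ i, 1 - 2*δ < f i (x i) := by
      intro i
      have h2 := hx2 i
      rw [ContinuousLinearMap.add_apply] at h2
      have := hb G (x i) hGnorm (hx1 i)
      linarith
    have hGx : ∀ i, 1 - 2*δ < G (x i) := by
      intro i
      have h2 := hx2 i
      rw [ContinuousLinearMap.add_apply] at h2
      have := hb (f i) (x i) (hf i) (hx1 i)
      linarith
    have hfy : ∀ i, 1 - 2*δ < f i (y i) := by
      intro i
      have h2 := hy2 i
      rw [ContinuousLinearMap.sub_apply] at h2
      have : -(G (y i)) ≤ 1 := by
        have := hb (-G) (y i) (by rw [norm_neg]; exact hGnorm) (hy1 i)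
        simpa using this
      linarith
    have hGy : ∀ i, G (y i) < -(1 - 2*δ) := by
      intro i
      have h2 := hy2 i
      rw [ContinuousLinearMap.sub_apply] at h2
      have := hb (f i) (y i) (hf i) (hy1 i)
      linarith
    -- membership in slices
    have hδε : 2*δ < ε₀ := by
      have : δ ≤ ε₀/4 := min_le_right _ _
      linarith
    have hxS : ∀ i, x i ∈ S i := by
      intro i
      rw [hSeq i]
      refine ⟨hball _ (hx1 i), ?_⟩
      have hεi : ε₀ ≤ ε i := Finset.inf'_le _ (Finset.mem_univ i)
      have := hfx i
      show 1 - ε i < f i (x i)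
      linarith
    have hyS : ∀ i, y i ∈ S i := by
      intro i
      rw [hSeq i]
      refine ⟨hball _ (hy1 i), ?_⟩
      have hεi : ε₀ ≤ ε i := Finset.inf'_le _ (Finset.mem_univ i)
      have := hfy i
      show 1 - ε i < f i (y i)
      linarith
    -- the two points
    set z : X := ∑ i, lam i • x i with hz
    set w : X := ∑ i, lam i • y i with hw
    have hzD : z ∈ D := ⟨x, hxS, rfl⟩
    have hwD : w ∈ D := ⟨y, hyS, rfl⟩
    have hGzw : 2 - 4*δ ≤ G z - G w := by
      have hGz : G z = ∑ i, lam i * G (x i) := by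
        rw [hz, map_sum]
        refine Finset.sum_congr rfl fun i _ => ?_
        rw [map_smul, smul_eq_mul]
      have hGw : G w = ∑ i, lam i * G (y i) := by
        rw [hw, map_sum]
        refine Finset.sum_congr rfl fun i _ => ?_
        rw [map_smul, smul_eq_mul]
      rw [hGz, hGw, ← Finset.sum_sub_distrib]
      calc (2:ℝ) - 4*δ = ∑ i, lam i * (2 - 4*δ) := by
            rw [← Finset.sum_mul, hsum, one_mul]
        _ ≤ ∑ i, (lam i * G (x i) - lam i * G (y i)) := by
            refine Finset.sum_le_sum fun i _ => ?_
            rw [← mul_sub]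
            refine mul_le_mul_of_nonneg_left ?_ (hlam i)
            have := hGx i
            have := hGy i
            linarith
    have hdist : 2 - 4*δ ≤ dist z w := by
      have h1 : G z - G w ≤ ‖z - w‖ := by
        calc G z - G w = G (z - w) := (map_sub G z w).symm
          _ ≤ |G (z - w)| := le_abs_self _
          _ ≤ ‖G‖ * ‖z - w‖ := by rw [← Real.norm_eq_abs]; exact G.le_opNorm _
          _ = ‖z - w‖ := by rw [hGnorm, one_mul]
      rw [dist_eq_norm]
      linarith
    have hbdd : Bornology.IsBounded D := by
      refine (Metric.isBounded_closedBall (x := (0:X)) (r := 1)).subset fun z hz => ?_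
      simpa [mem_closedBall, dist_eq_norm] using hDnorm z hz
    have := Metric.dist_le_diam_of_mem hbdd hzD hwD
    have hδη : 4*δ ≤ η := by
      have : δ ≤ η/4 := min_le_left _ _
      linarith
    linarith
  refine le_antisymm hupper ?_
  exact le_of_forall_sub_le hlower
end
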